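/- arXiv:1307.3681 — 5 statements merged into one kernel-verified Lean document; each statement's English description precedes it below -/
import Mathlib

section
/- If t ≥ 2, then for every ρ ∈ Amoeba(f) there exists σ ∈ ArchTrop(f) with |ρ − σ| ≤ log(t−1); equivalently, every x ∈ (ℂ∖{0})^n with f(x) = 0 satisfies dist(Log|x|, ArchTrop(f)) ≤ log(t−1). -/
open Pointwise

/-- Evaluation of the Laurent polynomial `f(x) = ∑ i, c i * x^{a i}` at `x ∈ (ℂ∖{0})^n`. -/
noncomputable def lpoly {n : ℕ} {ι : Type*} [Fintype ι] (c : ι → ℂ) (a : ι → Fin n → ℤ)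
    (x : Fin n → ℂ) : ℂ :=
  ∑ i, c i * ∏ j, x j ^ a i j

/-- `Log|x| = (log|x_1|, …, log|x_n|)`. -/
noncomputable def LogAbs {n : ℕ} (x : Fin n → ℂ) : EuclideanSpace ℝ (Fin n) :=
  WithLp.toLp 2 (fun j => Real.log (‖x j‖))

/-- `Amoeba(f) = { Log|x| : x ∈ (ℂ∖{0})^n, f(x) = 0 }`. -/
noncomputable def Amoeba {n : ℕ} {ι : Type*} [Fintype ι] (c : ι → ℂ) (a : ι → Fin n → ℤ) :
    Set (EuclideanSpace ℝ (Fin n)) :=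
  {w | ∃ x : Fin n → ℂ, (∀ j, x j ≠ 0) ∧ lpoly c a x = 0 ∧ w = LogAbs x}

/-- `|c_i| e^{a_i · v}`, the `i`-th tropical term of `f` at `v`. -/
noncomputable def tropTerm {n : ℕ} {ι : Type*} (c : ι → ℂ) (a : ι → Fin n → ℤ)
    (v : EuclideanSpace ℝ (Fin n)) (i : ι) : ℝ :=
  ‖c i‖ * Real.exp (∑ j, (a i j : ℝ) * v j)

/-- `ArchTrop(f)`: the set of `v ∈ ℝ^n` where the maximum of `|c_i| e^{a_i·v}` is attained
at least twice. -/
noncomputable def ArchTrop {n : ℕ} {ι : Type*} (c : ι → ℂ) (a : ι → Fin n → ℤ) :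
    Set (EuclideanSpace ℝ (Fin n)) :=
  {v | ∃ i k : ι, i ≠ k ∧ (∀ l, tropTerm c a v l ≤ tropTerm c a v i) ∧
      tropTerm c a v i = tropTerm c a v k}

/-- Auxiliary: the "log" of the `i`-th tropical term. -/
noncomputable def Hfun {n : ℕ} {ι : Type*} (c : ι → ℂ) (a : ι → Fin n → ℤ)
    (v : EuclideanSpace ℝ (Fin n)) (i : ι) : ℝ :=
  Real.log ‖c i‖ + ∑ j, (a i j : ℝ) * v j

lemma tropTerm_eq_exp {n : ℕ} {ι : Type*} {c : ι → ℂ} (a : ι → Fin n → ℤ)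
    (v : EuclideanSpace ℝ (Fin n)) {i : ι} (hc : c i ≠ 0) :
    tropTerm c a v i = Real.exp (Hfun c a v i) := by
  rw [tropTerm, Hfun, Real.exp_add, Real.exp_log (norm_pos_iff.mpr hc)]

lemma trop_at_log {n : ℕ} {ι : Type*} (c : ι → ℂ) (a : ι → Fin n → ℤ)
    (x : Fin n → ℂ) (hx : ∀ j, x j ≠ 0) (i : ι) :
    tropTerm c a (LogAbs x) i = ‖c i * ∏ j, x j ^ a i j‖ := by
  rw [tropTerm, norm_mul, norm_prod, Real.exp_sum]
  congr 1
  refine Finset.prod_congr rfl fun j _ => ?_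
  rw [norm_zpow]
  have hpos : 0 < ‖x j‖ := norm_pos_iff.mpr (hx j)
  rw [show (LogAbs x) j = Real.log ‖x j‖ from rfl]
  rw [← Real.rpow_intCast ‖x j‖ (a i j), Real.rpow_def_of_pos hpos, mul_comm]

lemma Hfun_line {n : ℕ} {ι : Type*} (c : ι → ℂ) (a : ι → Fin n → ℤ)
    (ρ : EuclideanSpace ℝ (Fin n)) (d : Fin n → ℝ) (s : ℝ) (i : ι) :
    Hfun c a (WithLp.toLp 2 (fun j => ρ j + s * d j)) i
      = Hfun c a ρ i + s * ∑ j, (a i j : ℝ) * d j := by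
  simp only [Hfun, PiLp.toLp_apply]
  rw [Finset.mul_sum, add_assoc, ← Finset.sum_add_distrib]
  congr 1
  refine Finset.sum_congr rfl fun j _ => ?_
  ring

/-- Every point of `Amoeba(f)` lies within Euclidean distance `log(t-1)` of some point
of `ArchTrop(f)`: every root `x ∈ (ℂ∖{0})^n` of `f` satisfies
`dist(Log|x|, ArchTrop(f)) ≤ log(t-1)`. -/
theorem stmt4 {n t : ℕ} (hn : 1 ≤ n) (ht : 2 ≤ t)
    (c : Fin t → ℂ) (a : Fin t → Fin n → ℤ)
    (ha : Function.Injective a) (hc : ∀ i, c i ≠ 0) :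
    ∀ x : Fin n → ℂ, (∀ j, x j ≠ 0) → lpoly c a x = 0 →
      ∃ σ ∈ ArchTrop c a, dist (LogAbs x) σ ≤ Real.log ((t : ℝ) - 1) := by
  intro x hx hfx
  set ρ : EuclideanSpace ℝ (Fin n) := LogAbs x with hρdef
  set L : ℝ := Real.log ((t : ℝ) - 1) with hLdef
  have ht1 : (1 : ℝ) ≤ (t : ℝ) - 1 := by
    have : (2 : ℝ) ≤ (t : ℝ) := by exact_mod_cast ht
    linarith
  have hL : 0 ≤ L := Real.log_nonneg ht1
  -- the maximizing index i₀
  obtain ⟨i₀, -, hi₀'⟩ := Finset.exists_max_image Finset.univ (tropTerm c a ρ)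
    ⟨⟨0, by omega⟩, Finset.mem_univ _⟩
  have hi₀ : ∀ l, tropTerm c a ρ l ≤ tropTerm c a ρ i₀ := fun l => hi₀' l (Finset.mem_univ l)
  -- the second index k₀
  have herase : (Finset.univ.erase i₀).Nonempty := by
    obtain ⟨b, hb⟩ := Fintype.exists_ne_of_one_lt_card (by simp; omega) i₀
    exact ⟨b, Finset.mem_erase.2 ⟨hb, Finset.mem_univ b⟩⟩
  obtain ⟨k₀, hk₀mem, hk₀max⟩ :=
    Finset.exists_max_image (Finset.univ.erase i₀) (tropTerm c a ρ) herase
  have hk₀ne : k₀ ≠ i₀ := Finset.ne_of_mem_erase hk₀mem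
  -- from f(x) = 0 : T i₀ ≤ (t-1) * T k₀
  have hTbound : tropTerm c a ρ i₀ ≤ ((t : ℝ) - 1) * tropTerm c a ρ k₀ := by
    have h0 : c i₀ * ∏ j, x j ^ a i₀ j
        = - ∑ l ∈ Finset.univ.erase i₀, c l * ∏ j, x j ^ a l j := by
      have hadd := Finset.add_sum_erase Finset.univ (fun i => c i * ∏ j, x j ^ a i j)
        (Finset.mem_univ i₀)
      rw [lpoly] at hfx
      rw [hfx] at hadd
      linear_combination hadd
    have h1 : tropTerm c a ρ i₀ ≤ ∑ l ∈ Finset.univ.erase i₀, tropTerm c a ρ l := by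
      rw [hρdef, trop_at_log c a x hx, h0, norm_neg]
      refine le_trans (norm_sum_le _ _) ?_
      exact le_of_eq (Finset.sum_congr rfl fun l _ => (trop_at_log c a x hx l).symm)
    have h2 : ∑ l ∈ Finset.univ.erase i₀, tropTerm c a ρ l
        ≤ (t - 1) • tropTerm c a ρ k₀ := by
      have hcard : (Finset.univ.erase i₀).card = t - 1 := by
        rw [Finset.card_erase_of_mem (Finset.mem_univ i₀)]
        simp
      rw [← hcard]
      exact Finset.sum_le_card_nsmul _ _ _ fun l hl => hk₀max l hl
    rw [nsmul_eq_mul, Nat.cast_sub (by omega), Nat.cast_one] at h2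
    linarith
  -- set-up for the segment argument
  set d : Fin n → ℝ := fun j => (a k₀ j : ℝ) - (a i₀ j : ℝ) with hddef
  set Dsq : ℝ := ∑ j, d j ^ 2 with hDsqdef
  set m : Fin t → ℝ := fun l => ∑ j, (a l j : ℝ) * d j with hmdef
  set A : Fin t → ℝ := fun l => Hfun c a ρ l - Hfun c a ρ i₀ with hAdef
  set B : Fin t → ℝ := fun l => m l - m i₀ with hBdef
  have hBk : B k₀ = Dsq := by
    rw [hBdef, hmdef, hDsqdef]
    simp only
    rw [← Finset.sum_sub_distrib]
    refine Finset.sum_congr rfl fun j _ => ?_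
    rw [hddef]; ring
  have hDsq1 : 1 ≤ Dsq := by
    have hane : a k₀ ≠ a i₀ := fun h => hk₀ne (ha h)
    obtain ⟨j₀, hj₀⟩ := Function.ne_iff.1 hane
    have hdj : 1 ≤ d j₀ ^ 2 := by
      have h1 : (1 : ℤ) ≤ (a k₀ j₀ - a i₀ j₀) ^ 2 := by
        rcases lt_trichotomy (a k₀ j₀) (a i₀ j₀) with h | h | h
        · nlinarith
        · exact absurd h hj₀
        · nlinarith
      have : ((1 : ℤ) : ℝ) ≤ (((a k₀ j₀ - a i₀ j₀) ^ 2 : ℤ) : ℝ) := by exact_mod_cast h1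
      push_cast at this
      rw [hddef]
      convert this using 2
    rw [hDsqdef]
    calc (1:ℝ) ≤ d j₀ ^ 2 := hdj
    _ ≤ ∑ j, d j ^ 2 := Finset.single_le_sum (fun j _ => sq_nonneg (d j)) (Finset.mem_univ j₀)
  have hDsq0 : 0 < Dsq := by linarith
  have hA0 : ∀ l, A l ≤ 0 := by
    intro l
    have := hi₀ l
    rw [tropTerm_eq_exp a ρ (hc l), tropTerm_eq_exp a ρ (hc i₀), Real.exp_le_exp] at this
    rw [hAdef]; simp only; linarith
  have hAk : -L ≤ A k₀ := by
    have h := hTbound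
    rw [tropTerm_eq_exp a ρ (hc i₀), tropTerm_eq_exp a ρ (hc k₀)] at h
    have hrw : ((t : ℝ) - 1) * Real.exp (Hfun c a ρ k₀)
        = Real.exp (L + Hfun c a ρ k₀) := by
      rw [Real.exp_add, hLdef, Real.exp_log (by linarith)]
    rw [hrw, Real.exp_le_exp] at h
    rw [hAdef]; simp only; linarith
  -- the candidate step sizes
  set F : Finset (Fin t) := Finset.univ.filter (fun l => 0 < B l) with hFdef
  have hkF : k₀ ∈ F := by
    rw [hFdef, Finset.mem_filter]
    exact ⟨Finset.mem_univ _, by rw [hBk]; linarith⟩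
  have hFne : F.Nonempty := ⟨k₀, hkF⟩
  set r : Fin t → ℝ := fun l => -(A l) / B l with hrdef
  have hr0 : ∀ l ∈ F, 0 ≤ r l := by
    intro l hl
    rw [hFdef, Finset.mem_filter] at hl
    rw [hrdef]
    exact div_nonneg (by linarith [hA0 l]) (le_of_lt hl.2)
  set s1 : ℝ := L / Dsq with hs1def
  have hs10 : 0 ≤ s1 := div_nonneg hL (le_of_lt hDsq0)
  set sS : ℝ := min s1 (F.inf' hFne r) with hsSdef
  have hsS0 : 0 ≤ sS := le_min hs10 (Finset.le_inf' hFne r hr0)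
  have hsSs1 : sS ≤ s1 := min_le_left _ _
  -- inequalities at sS
  have hgle : ∀ l, A l + sS * B l ≤ 0 := by
    intro l
    rcases le_or_gt (B l) 0 with hB | hB
    · have := hA0 l
      nlinarith
    · have hlF : l ∈ F := by rw [hFdef, Finset.mem_filter]; exact ⟨Finset.mem_univ _, hB⟩
      have : sS ≤ r l := le_trans (min_le_right _ _) (Finset.inf'_le r hlF)
      rw [hrdef] at this
      have := (le_div_iff₀ hB).1 this
      linarith
  -- the tie index
  have htie : ∃ l₀, l₀ ≠ i₀ ∧ A l₀ + sS * B l₀ = 0 := by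
    rcases le_or_gt (F.inf' hFne r) s1 with hcase | hcase
    · obtain ⟨l₀, hl₀F, hl₀⟩ := Finset.exists_mem_eq_inf' hFne r
      have hsSval : sS = r l₀ := by rw [hsSdef, min_eq_right (hl₀ ▸ hcase), hl₀]
      have hBl₀ : 0 < B l₀ := by
        rw [hFdef, Finset.mem_filter] at hl₀F; exact hl₀F.2
      have hBi₀ : B i₀ = 0 := by rw [hBdef]; simp
      refine ⟨l₀, fun h => by rw [h, hBi₀] at hBl₀; exact lt_irrefl 0 hBl₀, ?_⟩
      rw [hsSval, hrdef]
      field_simp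
      ring
    · have hsSval : sS = s1 := min_eq_left (le_of_lt hcase)
      refine ⟨k₀, hk₀ne, le_antisymm (hgle k₀) ?_⟩
      rw [hsSval, hs1def, hBk, div_mul_cancel₀ _ (ne_of_gt hDsq0)]
      linarith [hAk]
  obtain ⟨l₀, hl₀ne, hl₀eq⟩ := htie
  -- the point σ
  set σ : EuclideanSpace ℝ (Fin n) := WithLp.toLp 2 (fun j => ρ j + sS * d j) with hσdef
  have hHσ : ∀ i, Hfun c a σ i = Hfun c a ρ i + sS * m i := by
    intro i
    rw [hσdef, hmdef]
    exact Hfun_line c a ρ d sS i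
  refine ⟨σ, ⟨i₀, l₀, fun h => hl₀ne h.symm, ?_, ?_⟩, ?_⟩
  · intro l
    rw [tropTerm_eq_exp a σ (hc l), tropTerm_eq_exp a σ (hc i₀), Real.exp_le_exp,
      hHσ l, hHσ i₀]
    have h1 := hgle l
    rw [hAdef, hBdef] at h1
    simp only at h1
    linarith
  · rw [tropTerm_eq_exp a σ (hc i₀), tropTerm_eq_exp a σ (hc l₀), Real.exp_eq_exp,
      hHσ l₀, hHσ i₀]
    rw [hAdef, hBdef] at hl₀eq
    simp only at hl₀eq
    linarith
  · -- distance bound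
    rw [EuclideanSpace.dist_eq]
    have hterm : ∀ j, dist (LogAbs x j) (σ j) ^ 2 = sS ^ 2 * d j ^ 2 := by
      intro j
      rw [hσdef, Real.dist_eq, ← hρdef, PiLp.toLp_apply]
      rw [show ρ j - (ρ j + sS * d j) = -(sS * d j) by ring, abs_neg, sq_abs]
      ring
    rw [Finset.sum_congr rfl fun j _ => hterm j, ← Finset.mul_sum, ← hDsqdef]
    have hkey : sS ^ 2 * Dsq ≤ L ^ 2 := by
      have h1 : sS * Dsq ≤ L := by
        have := hsSs1
        rw [hs1def] at this
        exact (le_div_iff₀ hDsq0).1 this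
      have hsSL : sS ≤ L :=
        le_trans hsSs1 (by rw [hs1def]; exact div_le_self hL hDsq1)
      nlinarith [mul_le_mul_of_nonneg_left h1 hsS0, mul_le_mul_of_nonneg_right hsSL hL]
    calc Real.sqrt (sS ^ 2 * Dsq) ≤ Real.sqrt (L ^ 2) := Real.sqrt_le_sqrt hkey
    _ = L := Real.sqrt_sq hL
end

section
/- Assume t ≥ 2, a_1 = 0, a_t = d ≥ 1, |c_i| ≤ 1 for all i ∈ {1,…,t}, and |c_1| = |c_t| = 1. Then ArchTrop(f) = {0}, and f has a root ζ ∈ ℂ∖{0} with |log|ζ|| ≤ log((√5 + 1)/2) < 0.482; in particular, the point 0 ∈ ArchTrop(f) lies within distance log((√5+1)/2) of Amoeba(f). -/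
/-- Evaluation of the univariate polynomial `f(x) = ∑ i, c i * x^{a i}` (with integer
exponents) at `x ∈ ℂ∖{0}`. -/
noncomputable def upoly {t : ℕ} (c : Fin t → ℂ) (a : Fin t → ℤ) (x : ℂ) : ℂ :=
  ∑ i, c i * x ^ a i

/-- `|c_i| e^{a_i v}`, the `i`-th tropical term of `f` at `v ∈ ℝ`. -/
noncomputable def tropTerm1 {t : ℕ} (c : Fin t → ℂ) (a : Fin t → ℤ) (v : ℝ) (i : Fin t) : ℝ :=
  ‖c i‖ * Real.exp ((a i : ℝ) * v)

/-- `ArchTrop(f) ⊆ ℝ`: the set of `v` where the maximum of `|c_i| e^{a_i v}` is attained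
at least twice. -/
noncomputable def ArchTrop1 {t : ℕ} (c : Fin t → ℂ) (a : Fin t → ℤ) : Set ℝ :=
  {v | ∃ i k : Fin t, i ≠ k ∧ (∀ l, tropTerm1 c a v l ≤ tropTerm1 c a v i) ∧
      tropTerm1 c a v i = tropTerm1 c a v k}

open Polynomial

namespace Stmt8Aux

noncomputable def phi : ℝ := (Real.sqrt 5 + 1) / 2

lemma sqrt5_sq : Real.sqrt 5 ^ 2 = 5 := Real.sq_sqrt (by norm_num)

lemma sqrt5_ge : (2.2 : ℝ) ≤ Real.sqrt 5 := by
  nlinarith [sqrt5_sq, Real.sqrt_nonneg 5]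

lemma sqrt5_le : Real.sqrt 5 ≤ 2.2360679775 := by
  nlinarith [sqrt5_sq, Real.sqrt_nonneg 5]

lemma phi_ge : (1.6 : ℝ) ≤ phi := by unfold phi; linarith [sqrt5_ge]

lemma phi_le : phi ≤ 1.61803398875 := by unfold phi; linarith [sqrt5_le]

lemma one_lt_phi : 1 < phi := by linarith [phi_ge]

lemma phi_pos : 0 < phi := by linarith [phi_ge]

lemma phi_sq : phi ^ 2 = phi + 1 := by
  unfold phi; nlinarith [sqrt5_sq]

lemma phi_sub_inv : phi - 1 / phi = 1 := by
  have h := phi_sq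
  have h2 := phi_pos
  field_simp
  nlinarith

lemma phi_pow_ge (n : ℕ) (hn : 3 ≤ n) : (n + 1 : ℝ) ≤ phi ^ n := by
  induction n, hn using Nat.le_induction with
  | base =>
    have h := phi_ge
    have h0 : (0:ℝ) < phi := phi_pos
    norm_num
    nlinarith [pow_pos h0 3, sq_nonneg (phi - 1.6), sq_nonneg phi, mul_pos h0 h0]
  | succ n hn ih =>
    have h := phi_ge
    have h0 : (0:ℝ) ≤ phi ^ n := pow_nonneg (by linarith) n
    have hc : (3:ℝ) ≤ (n:ℝ) := by exact_mod_cast hn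
    rw [pow_succ]
    push_cast
    nlinarith

end Stmt8Aux
namespace Stmt8Aux

noncomputable def Nsq (p : ℂ[X]) : ℝ := ∑ i ∈ p.support, Complex.normSq (p.coeff i)

lemma Nsq_nonneg (p : ℂ[X]) : 0 ≤ Nsq p :=
  Finset.sum_nonneg fun i _ => Complex.normSq_nonneg _

lemma Nsq_eq_range {p : ℂ[X]} {n : ℕ} (h : p.natDegree < n) :
    Nsq p = ∑ i ∈ Finset.range n, Complex.normSq (p.coeff i) := by
  apply Finset.sum_subset
  · intro i hi
    exact Finset.mem_range.mpr (lt_of_le_of_lt (le_natDegree_of_mem_supp i hi) h)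
  · intro i _ hi
    rw [Polynomial.notMem_support_iff.mp hi]
    simp

lemma key_id (α u v : ℂ) :
    Complex.normSq (u - α * v) = Complex.normSq ((starRingEnd ℂ) α * u - v)
      + (1 - Complex.normSq α) * (Complex.normSq u - Complex.normSq v) := by
  simp only [Complex.normSq_apply, Complex.sub_re, Complex.sub_im, Complex.mul_re,
    Complex.mul_im, Complex.conj_re, Complex.conj_im]
  ring

lemma Nsq_swap (α : ℂ) (q : ℂ[X]) :
    Nsq ((X - C α) * q) = Nsq ((C ((starRingEnd ℂ) α) * X - 1) * q) := by
  set m := q.natDegree + 1 with hm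
  have hle1 : ((X - C α) * q).natDegree < m + 1 := by
    have h1 := natDegree_mul_le (p := X - C α) (q := q)
    have h2 : (X - C α).natDegree ≤ 1 := natDegree_X_sub_C_le α
    omega
  have hle2 : ((C ((starRingEnd ℂ) α) * X - 1) * q).natDegree < m + 1 := by
    have h1 := natDegree_mul_le (p := C ((starRingEnd ℂ) α) * X - 1) (q := q)
    have h2 : (C ((starRingEnd ℂ) α) * X - 1).natDegree ≤ 1 := by
      refine le_trans (natDegree_sub_le _ _) ?_
      have h3 : (C ((starRingEnd ℂ) α) * X).natDegree ≤ 1 := by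
        refine le_trans (natDegree_C_mul_le _ _) ?_
        simp
      simp [h3]
    omega
  rw [Nsq_eq_range hle1, Nsq_eq_range hle2]
  have c1 : ∀ i, ((X - C α) * q).coeff i = (X * q).coeff i - α * q.coeff i := by
    intro i; rw [sub_mul, coeff_sub, coeff_C_mul]
  have c2 : ∀ i, ((C ((starRingEnd ℂ) α) * X - 1) * q).coeff i
      = (starRingEnd ℂ) α * (X * q).coeff i - q.coeff i := by
    intro i; rw [sub_mul, one_mul, coeff_sub, mul_assoc, coeff_C_mul]
  have e1 : ∑ i ∈ Finset.range (m + 1), Complex.normSq ((X * q).coeff i)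
      = ∑ i ∈ Finset.range m, Complex.normSq (q.coeff i) := by
    rw [Finset.sum_range_succ']
    simp [coeff_X_mul, Polynomial.mul_coeff_zero, Polynomial.coeff_X_zero]
  have e2 : ∑ i ∈ Finset.range (m + 1), Complex.normSq (q.coeff i)
      = ∑ i ∈ Finset.range m, Complex.normSq (q.coeff i) := by
    rw [Finset.sum_range_succ, coeff_eq_zero_of_natDegree_lt (by omega)]
    simp
  calc ∑ i ∈ Finset.range (m + 1), Complex.normSq (((X - C α) * q).coeff i)
      = ∑ i ∈ Finset.range (m + 1),
          (Complex.normSq (((C ((starRingEnd ℂ) α) * X - 1) * q).coeff i)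
            + (1 - Complex.normSq α)
              * (Complex.normSq ((X * q).coeff i) - Complex.normSq (q.coeff i))) := by
        refine Finset.sum_congr rfl fun i _ => ?_
        rw [c1 i, c2 i, key_id]
    _ = (∑ i ∈ Finset.range (m + 1),
          Complex.normSq (((C ((starRingEnd ℂ) α) * X - 1) * q).coeff i))
          + (1 - Complex.normSq α)
            * ((∑ i ∈ Finset.range (m + 1), Complex.normSq ((X * q).coeff i))
              - ∑ i ∈ Finset.range (m + 1), Complex.normSq (q.coeff i)) := by
        rw [Finset.sum_add_distrib, ← Finset.mul_sum, Finset.sum_sub_distrib]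
    _ = ∑ i ∈ Finset.range (m + 1),
          Complex.normSq (((C ((starRingEnd ℂ) α) * X - 1) * q).coeff i) := by
        rw [e1, e2]; ring

lemma landau_aux : ∀ (n : ℕ) (s : Multiset ℂ) (k : ℂ),
    (Multiset.filter (fun z => 1 < ‖z‖) s).card = n →
    Complex.normSq k * ((s.map (fun z => max 1 (‖z‖))).prod) ^ 2
      ≤ Nsq (C k * (s.map (fun z => X - C z)).prod) := by
  intro n
  induction n with
  | zero =>
    intro s k hs
    have hall : ∀ z ∈ s, ‖z‖ ≤ 1 := by
      intro z hz
      by_contra hz1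
      have : z ∈ Multiset.filter (fun z => 1 < ‖z‖) s :=
        Multiset.mem_filter.mpr ⟨hz, not_le.mp hz1⟩
      rw [Multiset.card_eq_zero.mp hs] at this
      simp at this
    have hprod : (s.map (fun z => max 1 (‖z‖))).prod = 1 := by
      apply Multiset.prod_eq_one
      intro x hx
      obtain ⟨z, hz, rfl⟩ := Multiset.mem_map.mp hx
      exact max_eq_left (hall z hz)
    rw [hprod]
    by_cases hk : k = 0
    · simp [hk, Nsq_nonneg]
    · set p := C k * (s.map (fun z => X - C z)).prod with hp
      have hmon : ((s.map (fun z => X - C z)).prod).Monic :=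
        monic_multiset_prod_of_monic _ _ (fun i _ => monic_X_sub_C i)
      have hlc : p.leadingCoeff = k := by
        rw [hp, leadingCoeff_mul, leadingCoeff_C, hmon.leadingCoeff, mul_one]
      have hp0 : p ≠ 0 := fun h => hk (by rw [← hlc, h, leadingCoeff_zero])
      have hmem : p.natDegree ∈ p.support := natDegree_mem_support_of_nonzero hp0
      have hsum := Finset.single_le_sum
        (f := fun i => Complex.normSq (p.coeff i))
        (fun i _ => Complex.normSq_nonneg _) hmem
      have hfin : Complex.normSq k ≤ Nsq p := by
        simpa [Nsq, Polynomial.coeff_natDegree, hlc] using hsum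
      simpa using hfin
  | succ n ih =>
    intro s k hs
    have hex : ∃ α ∈ s, 1 < ‖α‖ := by
      have : 0 < (Multiset.filter (fun z => 1 < ‖z‖) s).card := by omega
      obtain ⟨α, hα⟩ := Multiset.card_pos_iff_exists_mem.mp this
      exact ⟨α, (Multiset.mem_filter.mp hα).1, (Multiset.mem_filter.mp hα).2⟩
    obtain ⟨α, hαs, hα⟩ := hex
    obtain ⟨s', rfl⟩ := Multiset.exists_cons_of_mem hαs
    have hαne : α ≠ 0 := by
      intro h; rw [h] at hα; simp only [norm_zero] at hα; linarith
    have hconj : (starRingEnd ℂ) α ≠ 0 := by simpa using hαne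
    have habsinv : ‖((starRingEnd ℂ) α)⁻¹‖ < 1 := by
      rw [norm_inv, Complex.norm_conj]
      rw [inv_lt_one_iff₀]
      right; exact hα
    have hp : C k * ((α ::ₘ s').map (fun z => X - C z)).prod
        = (X - C α) * (C k * (s'.map (fun z => X - C z)).prod) := by
      rw [Multiset.map_cons, Multiset.prod_cons]; ring
    rw [hp, Nsq_swap]
    have hfac : (C ((starRingEnd ℂ) α) * X - 1)
        = C ((starRingEnd ℂ) α) * (X - C (((starRingEnd ℂ) α)⁻¹)) := by
      rw [mul_sub, ← C_mul, mul_inv_cancel₀ hconj, C_1]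
    have hp2 : (C ((starRingEnd ℂ) α) * X - 1) * (C k * (s'.map (fun z => X - C z)).prod)
        = C ((starRingEnd ℂ) α * k)
          * (((((starRingEnd ℂ) α)⁻¹) ::ₘ s').map (fun z => X - C z)).prod := by
      rw [hfac, Multiset.map_cons, Multiset.prod_cons, C_mul]; ring
    rw [hp2]
    have hcard : (Multiset.filter (fun z => 1 < ‖z‖)
        ((((starRingEnd ℂ) α)⁻¹) ::ₘ s')).card = n := by
      rw [Multiset.filter_cons_of_neg _ (by simpa using not_lt.mpr habsinv.le)]
      rw [Multiset.filter_cons_of_pos _ (by simpa using hα)] at hs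
      simpa using hs
    refine le_trans (le_of_eq ?_) (ih _ _ hcard)
    rw [Multiset.map_cons, Multiset.prod_cons, Multiset.map_cons, Multiset.prod_cons]
    rw [max_eq_right hα.le, max_eq_left habsinv.le, one_mul]
    rw [Complex.normSq_mul, Complex.normSq_conj]
    rw [← Complex.sq_norm α]
    ring

end Stmt8Aux
namespace Stmt8Aux

lemma prod_map_le_pow (s : Multiset ℂ) (f : ℂ → ℝ) (b : ℝ) (hb : 0 ≤ b)
    (h : ∀ z ∈ s, 0 ≤ f z ∧ f z ≤ b) : (s.map f).prod ≤ b ^ Multiset.card s := by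
  induction s using Multiset.induction with
  | empty => simp
  | cons a s ih =>
    rw [Multiset.map_cons, Multiset.prod_cons, Multiset.card_cons, pow_succ']
    have hprodnn : 0 ≤ (s.map f).prod :=
      Multiset.prod_nonneg (by
        intro x hx
        obtain ⟨z, hz, rfl⟩ := Multiset.mem_map.mp hx
        exact (h z (Multiset.mem_cons_of_mem hz)).1)
    exact mul_le_mul (h a (Multiset.mem_cons_self a s)).2
      (ih fun z hz => h z (Multiset.mem_cons_of_mem hz)) hprodnn hb

lemma pow_le_prod_map (s : Multiset ℂ) (f : ℂ → ℝ) (b : ℝ) (hb : 0 ≤ b)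
    (h : ∀ z ∈ s, b ≤ f z) : b ^ Multiset.card s ≤ (s.map f).prod := by
  induction s using Multiset.induction with
  | empty => simp
  | cons a s ih =>
    rw [Multiset.map_cons, Multiset.prod_cons, Multiset.card_cons, pow_succ']
    exact mul_le_mul (h a (Multiset.mem_cons_self a s))
      (ih fun z hz => h z (Multiset.mem_cons_of_mem hz))
      (pow_nonneg hb _) (le_trans hb (h a (Multiset.mem_cons_self a s)))

lemma prod_map_pos (s : Multiset ℂ) (f : ℂ → ℝ) (h : ∀ z ∈ s, 0 < f z) :
    0 < (s.map f).prod := by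
  apply Multiset.prod_pos
  intro x hx
  obtain ⟨z, hz, rfl⟩ := Multiset.mem_map.mp hx
  exact h z hz

lemma pow_lt_prod_map (s : Multiset ℂ) (f : ℂ → ℝ) (b : ℝ) (hb : 0 ≤ b)
    (h : ∀ z ∈ s, b < f z) (hs : s ≠ 0) : b ^ Multiset.card s < (s.map f).prod := by
  obtain ⟨a, ha⟩ := Multiset.exists_mem_of_ne_zero hs
  obtain ⟨s', rfl⟩ := Multiset.exists_cons_of_mem ha
  have hpos : 0 < (s'.map f).prod :=
    prod_map_pos s' f fun z hz => lt_of_le_of_lt hb (h z (Multiset.mem_cons_of_mem hz))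
  rw [Multiset.map_cons, Multiset.prod_cons, Multiset.card_cons, pow_succ']
  calc b * b ^ Multiset.card s'
      ≤ b * (s'.map f).prod := by
        refine mul_le_mul_of_nonneg_left ?_ hb
        exact pow_le_prod_map s' f b hb fun z hz => (h z (Multiset.mem_cons_of_mem hz)).le
    _ < f a * (s'.map f).prod :=
        mul_lt_mul_of_pos_right (h a (Multiset.mem_cons_self a s')) hpos

end Stmt8Aux
namespace Stmt8Aux

lemma exists_root_annulus (p : ℂ[X]) (hdeg : 1 ≤ p.natDegree)
    (hcoeff : ∀ n, ‖p.coeff n‖ ≤ 1)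
    (h0 : ‖p.coeff 0‖ = 1) (hl : ‖p.leadingCoeff‖ = 1) :
    ∃ z ∈ p.roots, 1 / phi ≤ ‖z‖ ∧ ‖z‖ ≤ phi := by
  by_contra hcon
  push_neg at hcon
  have h : ∀ z ∈ p.roots, ‖z‖ < 1 / phi ∨ phi < ‖z‖ := by
    intro z hz
    rcases lt_or_ge (‖z‖) (1 / phi) with h' | h'
    · exact Or.inl h'
    · exact Or.inr (hcon z hz h')
  have hp0 : p ≠ 0 := by
    intro hh; rw [hh] at h0; norm_num at h0
  set R := p.roots with hR
  have hsplit : p = C p.leadingCoeff * (R.map (fun z => X - C z)).prod :=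
    (IsAlgClosed.splits p).eq_prod_roots
  have hcard : Multiset.card R = p.natDegree :=
    splits_iff_card_roots.mp (IsAlgClosed.splits p)
  -- product of |roots| equals 1
  have he : p.eval 0 = p.leadingCoeff * ((R.map (fun z => (0:ℂ) - z)).prod) := by
    conv_lhs => rw [hsplit]
    rw [eval_mul, eval_C, eval_multiset_prod, Multiset.map_map]
    congr 1
    refine congrArg Multiset.prod ?_
    refine Multiset.map_congr rfl fun z _ => ?_
    simp
  have habs0 : ‖p.eval 0‖
      = ‖p.leadingCoeff‖ * (R.map (‖·‖)).prod := by
    rw [he, norm_mul, show ∀ m : Multiset ℂ, ‖m.prod‖ = (m.map (‖·‖)).prod from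
      fun m => map_multiset_prod (normHom : ℂ →*₀ ℝ) m, Multiset.map_map]
    congr 1
    refine congrArg Multiset.prod ?_
    refine Multiset.map_congr rfl fun z _ => ?_
    simp
  have habs1 : (R.map (‖·‖)).prod = 1 := by
    have h2 := habs0
    rw [← coeff_zero_eq_eval_zero, h0, hl, one_mul] at h2
    exact h2.symm
  set S := Multiset.filter (fun z => ‖z‖ ≤ 1) R with hS
  set L := Multiset.filter (fun z => ¬ ‖z‖ ≤ 1) R with hL
  have hSL : S + L = R := Multiset.filter_add_not _ R
  set A := (S.map (‖·‖)).prod with hA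
  set B := (L.map (‖·‖)).prod with hB
  have hAB : A * B = 1 := by
    rw [hA, hB, ← Multiset.prod_add, ← Multiset.map_add, hSL, habs1]
  have hinvlt : 1 / phi < 1 := by
    rw [div_lt_one phi_pos]; exact one_lt_phi
  have hSsmall : ∀ z ∈ S, ‖z‖ < 1 / phi := by
    intro z hz
    obtain ⟨hzR, hz1⟩ := Multiset.mem_filter.mp hz
    rcases h z hzR with h' | h'
    · exact h'
    · exact absurd (lt_of_lt_of_le (lt_trans one_lt_phi h') (le_refl _))
        (not_lt.mpr (le_trans hz1 (le_refl 1) |>.trans (le_refl 1)) |> fun _ => by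
          exact absurd h' (not_lt.mpr (le_trans hz1 one_lt_phi.le)))
  have hLbig : ∀ z ∈ L, phi < ‖z‖ := by
    intro z hz
    obtain ⟨hzR, hz1⟩ := Multiset.mem_filter.mp hz
    have hz2 : 1 < ‖z‖ := not_le.mp hz1
    rcases h z hzR with h' | h'
    · exact absurd h' (not_lt.mpr (le_trans hinvlt.le hz2.le))
    · exact h'
  have hA_le : A ≤ (1 / phi) ^ Multiset.card S :=
    prod_map_le_pow S _ _ (div_pos one_pos phi_pos).le
      (fun z hz => ⟨norm_nonneg z, (hSsmall z hz).le⟩)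
  have hB_ge : phi ^ Multiset.card L ≤ B :=
    pow_le_prod_map L _ _ phi_pos.le (fun z hz => (hLbig z hz).le)
  have hAnn : 0 ≤ A := Multiset.prod_nonneg (by
    intro x hx
    obtain ⟨z, hz, rfl⟩ := Multiset.mem_map.mp hx
    exact norm_nonneg z)
  have hBpos : 0 < B :=
    prod_map_pos L _ (fun z hz => lt_trans phi_pos (hLbig z hz))
  have hcards : Multiset.card S + Multiset.card L = p.natDegree := by
    rw [← hcard, ← hSL, Multiset.card_add]
  rcases Nat.eq_zero_or_pos (Multiset.card L) with hl0 | hlpos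
  · -- no large roots
    have hLz : L = 0 := Multiset.card_eq_zero.mp hl0
    have hB1 : B = 1 := by rw [hB, hLz]; simp
    have hA1 : A = 1 := by rw [hB1, mul_one] at hAB; exact hAB
    have hs1 : Multiset.card S ≠ 0 := by omega
    have : A < 1 := lt_of_le_of_lt hA_le (pow_lt_one₀ (div_pos one_pos phi_pos).le hinvlt hs1)
    linarith
  rcases Nat.eq_zero_or_pos (Multiset.card S) with hs0 | hspos
  · have hSz : S = 0 := Multiset.card_eq_zero.mp hs0
    have hA1 : A = 1 := by rw [hA, hSz]; simp
    have hB1 : B = 1 := by rw [hA1, one_mul] at hAB; exact hAB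
    have : (1:ℝ) < phi ^ Multiset.card L := one_lt_pow₀ one_lt_phi (by omega)
    linarith
  -- Landau bound
  have hM : (R.map (fun z => max 1 (‖z‖))).prod = B := by
    rw [← hSL, Multiset.map_add, Multiset.prod_add]
    have hSone : (S.map (fun z => max 1 (‖z‖))).prod = 1 := by
      apply Multiset.prod_eq_one
      intro x hx
      obtain ⟨z, hz, rfl⟩ := Multiset.mem_map.mp hx
      exact max_eq_left (Multiset.mem_filter.mp hz).2
    have hLeq : L.map (fun z => max 1 (‖z‖)) = L.map (‖·‖) :=
      Multiset.map_congr rfl fun z hz =>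
        max_eq_right ((one_lt_phi.trans (hLbig z hz)).le)
    rw [hSone, hLeq, one_mul]
  have hLan := landau_aux _ R p.leadingCoeff rfl
  rw [← hsplit, hM] at hLan
  have hnsl : Complex.normSq p.leadingCoeff = 1 := by
    rw [← Complex.sq_norm, hl]; norm_num
  rw [hnsl, one_mul] at hLan
  have hNsq : Nsq p ≤ (p.natDegree + 1 : ℝ) := by
    rw [Nsq_eq_range (Nat.lt_succ_self _)]
    calc ∑ i ∈ Finset.range (p.natDegree + 1), Complex.normSq (p.coeff i)
        ≤ ∑ _i ∈ Finset.range (p.natDegree + 1), (1:ℝ) := by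
          refine Finset.sum_le_sum fun i _ => ?_
          rw [← Complex.sq_norm]
          nlinarith [hcoeff i, norm_nonneg (p.coeff i)]
      _ = (p.natDegree + 1 : ℝ) := by simp
  by_cases hD2 : p.natDegree = 2
  · -- quadratic case
    have hs1 : Multiset.card S = 1 := by omega
    have hl1 : Multiset.card L = 1 := by omega
    obtain ⟨z1, hSeq⟩ := Multiset.card_eq_one.mp hs1
    obtain ⟨z2, hLeq⟩ := Multiset.card_eq_one.mp hl1
    have hReq : R = z1 ::ₘ {z2} := by
      rw [← hSL, hSeq, hLeq]; rfl
    have hz1 : ‖z1‖ < 1 / phi := hSsmall z1 (by rw [hSeq]; simp)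
    have hz2 : phi < ‖z2‖ := hLbig z2 (by rw [hLeq]; simp)
    have hexp : (X - C z1) * (X - C z2) = X ^ 2 - C (z1 + z2) * X + C (z1 * z2) := by
      rw [C_add, C_mul]; ring
    have hco1 : p.coeff 1 = p.leadingCoeff * (-(z1 + z2)) := by
      conv_lhs => rw [hsplit, hReq]
      rw [Multiset.map_cons, Multiset.prod_cons, Multiset.map_singleton,
        Multiset.prod_singleton, hexp, coeff_C_mul]
      simp [coeff_X_pow, coeff_C]
    have habsco1 : ‖p.coeff 1‖ = ‖z1 + z2‖ := by
      rw [hco1, norm_mul, hl, one_mul, norm_neg]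
    have htri : ‖z2‖ ≤ ‖z1 + z2‖ + ‖z1‖ := by
      calc ‖z2‖ = ‖(z1 + z2) + (-z1)‖ := by ring_nf
        _ ≤ ‖z1 + z2‖ + ‖-z1‖ := norm_add_le _ _
        _ = ‖z1 + z2‖ + ‖z1‖ := by rw [norm_neg]
    have hsub := phi_sub_inv
    have := hcoeff 1
    rw [habsco1] at this
    linarith
  · have hD3 : 3 ≤ p.natDegree := by omega
    have hBl : phi ^ Multiset.card L < B :=
      pow_lt_prod_map L _ _ phi_pos.le hLbig
        (by intro hh; rw [hh] at hlpos; simp at hlpos)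
    have hBs : phi ^ Multiset.card S ≤ B := by
      have h1 : (1:ℝ) ≤ (1 / phi) ^ Multiset.card S * B := by
        calc (1:ℝ) = A * B := hAB.symm
          _ ≤ (1 / phi) ^ Multiset.card S * B :=
            mul_le_mul_of_nonneg_right hA_le hBpos.le
      have h2 := mul_le_mul_of_nonneg_left h1 (pow_nonneg phi_pos.le (Multiset.card S))
      rw [mul_one] at h2
      calc phi ^ Multiset.card S
          ≤ phi ^ Multiset.card S * ((1 / phi) ^ Multiset.card S * B) := h2
        _ = (phi * (1 / phi)) ^ Multiset.card S * B := by rw [mul_pow]; ring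
        _ = B := by rw [mul_one_div_cancel (ne_of_gt phi_pos), one_pow, one_mul]
    have hfinal : phi ^ p.natDegree < B ^ 2 := by
      rw [← hcards, pow_add]
      calc phi ^ Multiset.card S * phi ^ Multiset.card L
          ≤ B * phi ^ Multiset.card L :=
            mul_le_mul_of_nonneg_right hBs (pow_nonneg phi_pos.le _)
        _ < B * B := mul_lt_mul_of_pos_left hBl hBpos
        _ = B ^ 2 := (sq B).symm
    have hφD := phi_pow_ge p.natDegree hD3
    linarith

end Stmt8Aux
namespace Stmt8Aux

lemma log_phi_lt : Real.log phi < 0.482 := by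
  have h1 : phi ^ 27 < Real.exp 13 := by
    have hb : phi ^ 27 ≤ (1.61803398875 : ℝ) ^ 27 :=
      pow_le_pow_left₀ phi_pos.le phi_le 27
    have hn : (1.61803398875 : ℝ) ^ 27 < (2.7182818283 : ℝ) ^ 13 := by norm_num
    have he : (2.7182818283 : ℝ) ^ 13 < Real.exp 1 ^ 13 :=
      pow_lt_pow_left₀ Real.exp_one_gt_d9 (by norm_num) (by norm_num)
    have hee : Real.exp 1 ^ 13 = Real.exp 13 := by
      rw [← Real.exp_nat_mul]; norm_num
    linarith
  have h2 : phi < Real.exp (13 / 27) := by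
    refine lt_of_pow_lt_pow_left₀ 27 (Real.exp_pos _).le ?_
    have h3 : Real.exp (13 / 27) ^ 27 = Real.exp 13 := by
      rw [← Real.exp_nat_mul]; norm_num
    rw [h3]; exact h1
  have h4 := (Real.log_lt_iff_lt_exp phi_pos).mpr h2
  have h5 : (13 : ℝ) / 27 < 0.482 := by norm_num
  linarith

end Stmt8Aux

open Stmt8Aux

/-- If `a_1 = 0`, `a_t = d ≥ 1`, all `|c_i| ≤ 1`, and `|c_1| = |c_t| = 1`, then
`ArchTrop(f) = {0}` and `f` has a nonzero root `ζ` with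
`|log|ζ|| ≤ log((√5+1)/2) < 0.482`. -/
theorem stmt8 {t : ℕ} (ht : 2 ≤ t)
    (c : Fin t → ℂ) (a : Fin t → ℤ) (ha : StrictMono a) (hc : ∀ i, c i ≠ 0)
    (d : ℤ) (hd : 1 ≤ d)
    (ha0 : a ⟨0, by omega⟩ = 0) (had : a ⟨t - 1, by omega⟩ = d)
    (hle : ∀ i, ‖c i‖ ≤ 1)
    (hc0 : ‖c ⟨0, by omega⟩‖ = 1)
    (hcd : ‖c ⟨t - 1, by omega⟩‖ = 1) :
    ArchTrop1 c a = {0} ∧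
    (∃ ζ : ℂ, ζ ≠ 0 ∧ upoly c a ζ = 0 ∧
      |Real.log (‖ζ‖)| ≤ Real.log ((Real.sqrt 5 + 1) / 2)) ∧
    Real.log ((Real.sqrt 5 + 1) / 2) < 0.482 := by
  have ht0 : 0 < t := by omega
  have htT : t - 1 < t := by omega
  set i0 : Fin t := ⟨0, ht0⟩ with hi0
  set iT : Fin t := ⟨t - 1, htT⟩ with hiT
  have ha0' : a i0 = 0 := ha0
  have had' : a iT = d := had
  have hc0' : ‖c i0‖ = 1 := hc0
  have hcd' : ‖c iT‖ = 1 := hcd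
  refine ⟨?_, ?_, ?_⟩
  · -- ArchTrop1 = {0}
    ext v
    simp only [Set.mem_singleton_iff]
    constructor
    · rintro ⟨i, k, hik, hmax, heq⟩
      by_contra hv0
      have key : ∀ j : Fin t, (∀ l, l ≠ j → tropTerm1 c a v l < tropTerm1 c a v j) → False := by
        intro j hj
        have hi : i = j := by
          by_contra hij
          exact absurd (hmax j) (not_le.mpr (hj i hij))
        subst hi
        have hk := hj k (fun h => hik h.symm)
        rw [heq] at hk
        exact lt_irrefl _ hk
      rcases lt_or_gt_of_ne hv0 with hneg | hpos
      · -- v < 0 : index i0 is a strict max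
        apply key i0
        intro l hl
        have hl1 : (1 : ℤ) ≤ a l := by
          have h01 : a i0 < a l := by
            apply ha
            have hne : l.val ≠ 0 := fun h => hl (Fin.ext h)
            rw [Fin.lt_def]
            show 0 < l.val
            omega
          omega
        have hcast : (1 : ℝ) ≤ ((a l : ℤ) : ℝ) := by exact_mod_cast hl1
        have hexp : Real.exp ((a l : ℝ) * v) < 1 := by
          rw [show (1:ℝ) = Real.exp 0 from (Real.exp_zero).symm]
          apply Real.exp_lt_exp.mpr
          nlinarith
        have ht0' : tropTerm1 c a v i0 = 1 := by
          simp only [tropTerm1, ha0', hc0']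
          norm_num
        calc tropTerm1 c a v l
            ≤ 1 * Real.exp ((a l : ℝ) * v) :=
              mul_le_mul_of_nonneg_right (hle l) (Real.exp_pos _).le
          _ = Real.exp ((a l : ℝ) * v) := one_mul _
          _ < 1 := hexp
          _ = tropTerm1 c a v i0 := ht0'.symm
      · -- v > 0 : index iT is a strict max
        apply key iT
        intro l hl
        have hld : a l < d := by
          have : l < iT := by
            rw [Fin.lt_def]
            have h1 := l.isLt
            have h2 : l.val ≠ t - 1 := fun h => hl (Fin.ext h)
            simp only [hiT]
            omega
          have := ha this
          omega
        have hcast : ((a l : ℤ) : ℝ) < (d : ℝ) := by exact_mod_cast hld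
        have htT' : tropTerm1 c a v iT = Real.exp ((d : ℝ) * v) := by
          simp only [tropTerm1, had', hcd']
          norm_num
        calc tropTerm1 c a v l
            ≤ 1 * Real.exp ((a l : ℝ) * v) :=
              mul_le_mul_of_nonneg_right (hle l) (Real.exp_pos _).le
          _ = Real.exp ((a l : ℝ) * v) := one_mul _
          _ < Real.exp ((d : ℝ) * v) :=
              Real.exp_lt_exp.mpr (mul_lt_mul_of_pos_right hcast hpos)
          _ = tropTerm1 c a v iT := htT'.symm
    · rintro rfl
      have h0T : tropTerm1 c a 0 i0 = 1 := by
        simp only [tropTerm1, hc0']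
        norm_num
      have hTT : tropTerm1 c a 0 iT = 1 := by
        simp only [tropTerm1, hcd']
        norm_num
      refine ⟨i0, iT, ?_, ?_, ?_⟩
      · intro h
        have : (0 : ℕ) = t - 1 := congrArg Fin.val h
        omega
      · intro l
        calc tropTerm1 c a 0 l = ‖c l‖ := by
              simp [tropTerm1]
          _ ≤ 1 := hle l
          _ = tropTerm1 c a 0 i0 := h0T.symm
      · rw [h0T, hTT]
  · -- root existence
    have hanonneg : ∀ i : Fin t, 0 ≤ a i := by
      intro i
      have h1 : a i0 ≤ a i := ha.monotone (by rw [Fin.le_def]; exact Nat.zero_le _)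
      omega
    set e : Fin t → ℕ := fun i => (a i).toNat with hedef
    have hae : ∀ i, (a i : ℤ) = ((e i : ℕ) : ℤ) := fun i =>
      (Int.toNat_of_nonneg (hanonneg i)).symm
    have hemono : StrictMono e := by
      intro i j hij
      have h1 := ha hij
      have h2 := hanonneg i
      have h3 := hanonneg j
      simp only [hedef]
      omega
    set D : ℕ := d.toNat with hDdef
    have hDe : e iT = D := by simp only [hedef, hDdef, had']
    have hD1 : 1 ≤ D := by omega
    set p : ℂ[X] := ∑ i : Fin t, Polynomial.C (c i) * Polynomial.X ^ e i with hp
    have hcoeff : ∀ n, p.coeff n = ∑ i : Fin t, if n = e i then c i else 0 := by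
      intro n
      rw [hp, Polynomial.finset_sum_coeff]
      refine Finset.sum_congr rfl fun i _ => ?_
      rw [Polynomial.coeff_C_mul, Polynomial.coeff_X_pow]
      split <;> simp
    have hco : ∀ j : Fin t, p.coeff (e j) = c j := by
      intro j
      have hiff : ∀ i : Fin t, (if e j = e i then c i else 0) = (if i = j then c i else 0) := by
        intro i
        by_cases h : i = j
        · subst h; simp
        · rw [if_neg (fun hh => h (hemono.injective hh.symm)), if_neg h]
      calc p.coeff (e j) = ∑ i : Fin t, if e j = e i then c i else 0 := hcoeff _
        _ = ∑ i : Fin t, if i = j then c i else 0 :=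
            Finset.sum_congr rfl (fun i _ => hiff i)
        _ = c j := by simp
    have hcoeffle : ∀ n, ‖p.coeff n‖ ≤ 1 := by
      intro n
      by_cases hn : ∃ j : Fin t, e j = n
      · obtain ⟨j, rfl⟩ := hn
        rw [hco j]; exact hle j
      · have hz : p.coeff n = 0 := by
          rw [hcoeff]
          apply Finset.sum_eq_zero
          intro i _
          rw [if_neg (fun h => hn ⟨i, h.symm⟩)]
        rw [hz]; simp
    have hdeg_le : p.natDegree ≤ D := by
      apply Polynomial.natDegree_le_iff_coeff_eq_zero.mpr
      intro N hN
      rw [hcoeff]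
      apply Finset.sum_eq_zero
      intro i _
      have hei : e i ≤ D := by
        have h1 : e i ≤ e iT := hemono.monotone (by rw [Fin.le_def]; simp only [hiT]; omega)
        omega
      rw [if_neg (by omega)]
    have hcoD : p.coeff D = c iT := by rw [← hDe, hco]
    have hdeg_ge : D ≤ p.natDegree :=
      Polynomial.le_natDegree_of_ne_zero (by rw [hcoD]; exact hc iT)
    have hdeg : p.natDegree = D := le_antisymm hdeg_le hdeg_ge
    have hlead : p.leadingCoeff = c iT := by
      rw [Polynomial.leadingCoeff, hdeg, hcoD]
    have h00 : p.coeff 0 = c i0 := by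
      have he0 : e i0 = 0 := by simp [hedef, ha0']
      rw [← he0, hco]
    obtain ⟨z, hzR, hz1, hz2⟩ := exists_root_annulus p (by omega) hcoeffle
      (by rw [h00]; exact hc0') (by rw [hlead]; exact hcd')
    have hpne : p ≠ 0 := fun h => hc i0 (by rw [← h00, h]; simp)
    have hzroot : p.IsRoot z := (Polynomial.mem_roots hpne).mp hzR
    have hz0 : z ≠ 0 := by
      intro h
      subst h
      have hzz : p.coeff 0 = 0 := by
        rw [Polynomial.coeff_zero_eq_eval_zero]; exact hzroot
      rw [h00] at hzz
      exact hc i0 hzz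
    refine ⟨z, hz0, ?_, ?_⟩
    · have hup : upoly c a z = p.eval z := by
        rw [upoly, hp, Polynomial.eval_finset_sum]
        refine Finset.sum_congr rfl fun i _ => ?_
        rw [Polynomial.eval_mul, Polynomial.eval_C, Polynomial.eval_pow, Polynomial.eval_X,
          hae i, zpow_natCast]
      rw [hup]
      exact hzroot
    · rw [show (Real.sqrt 5 + 1) / 2 = phi from rfl]
      have hzpos : 0 < ‖z‖ := norm_pos_iff.mpr hz0
      rw [abs_le]
      constructor
      · have hlog : Real.log (1 / phi) ≤ Real.log (‖z‖) :=
          Real.log_le_log (div_pos one_pos phi_pos) hz1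
        rw [one_div, Real.log_inv] at hlog
        linarith
      · exact Real.log_le_log hzpos hz2
  · exact Stmt8Aux.log_phi_lt
end

section
/- For f(x) = x² − x − 1 one has ArchTrop(f) = {0}, and every root ζ ∈ ℂ of f satisfies |log|ζ|| = log((√5 + 1)/2); hence the distance from the point 0 ∈ ArchTrop(f) to Amoeba(f) is exactly log((√5+1)/2), so the bound log((√5+1)/2) is attained. -/
lemma roots_aux9 (ζ : ℂ) (h : ζ ^ 2 - ζ - 1 = 0) :
    |Real.log (‖ζ‖)| = Real.log ((Real.sqrt 5 + 1) / 2) := by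
  set s := Real.sqrt 5 with hs
  have hs2 : s ^ 2 = 5 := Real.sq_sqrt (by norm_num)
  have hsgt : 2 < s := by nlinarith [Real.sqrt_nonneg 5]
  have hsC : (s : ℂ) ^ 2 = 5 := by exact_mod_cast congrArg (Complex.ofReal ·) hs2
  have hfac : (ζ - ((1 + s) / 2 : ℝ)) * (ζ - ((1 - s) / 2 : ℝ)) = 0 := by
    push_cast
    linear_combination h - (1/4 : ℂ) * hsC
  rcases mul_eq_zero.mp hfac with h1 | h1
  · have hz : ζ = ((1 + s) / 2 : ℝ) := by linear_combination h1
    rw [hz, Complex.norm_real, Real.norm_eq_abs, show ((1 + s) / 2 : ℝ) = (s + 1) / 2 by ring,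
      abs_of_pos (show (0:ℝ) < (s + 1) / 2 by linarith),
      abs_of_nonneg (Real.log_nonneg (by linarith))]
  · have hz : ζ = ((1 - s) / 2 : ℝ) := by linear_combination h1
    have habs : |(1 - s) / 2| = ((s + 1) / 2)⁻¹ := by
      rw [abs_of_nonpos (by linarith)]
      exact eq_inv_of_mul_eq_one_left (by nlinarith)
    rw [hz, Complex.norm_real, Real.norm_eq_abs, habs, Real.log_inv, abs_neg,
      abs_of_nonneg (Real.log_nonneg (by linarith))]

/-- For `f(x) = x² - x - 1` (coefficients `-1, -1, 1` for exponents `0, 1, 2`),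
`ArchTrop(f) = {0}`, and every root `ζ` of `f` satisfies
`|log|ζ|| = log((√5+1)/2)`; in particular the distance from `0 ∈ ArchTrop(f)` to
`Amoeba(f)` is exactly `log((√5+1)/2)`, so this bound is attained. -/
theorem stmt9 :
    ArchTrop1 ![(-1 : ℂ), -1, 1] ![(0 : ℤ), 1, 2] = {0} ∧
    (∀ ζ : ℂ, ζ ^ 2 - ζ - 1 = 0 →
      |Real.log (‖ζ‖)| = Real.log ((Real.sqrt 5 + 1) / 2)) ∧
    (∃ ζ : ℂ, ζ ^ 2 - ζ - 1 = 0 ∧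
      |Real.log (‖ζ‖)| = Real.log ((Real.sqrt 5 + 1) / 2)) := by
  refine ⟨?_, fun ζ h => roots_aux9 ζ h, ?_⟩
  · ext v
    simp only [ArchTrop1, Set.mem_setOf_eq, Set.mem_singleton_iff]
    constructor
    · rintro ⟨i, k, hik, hmax, heq⟩
      clear hmax
      fin_cases i <;> fin_cases k <;> simp [tropTerm1] at heq hik <;>
        (try rw [show (1:ℝ) = Real.exp 0 by simp] at heq) <;>
        first | linarith [heq] | linarith [Real.exp_injective heq]
    · rintro rfl
      refine ⟨0, 1, by decide, ?_, ?_⟩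
      · intro l; fin_cases l <;> simp [tropTerm1]
      · simp [tropTerm1]
  · refine ⟨(((1 + Real.sqrt 5) / 2 : ℝ) : ℂ), ?_, ?_⟩
    · have hsC : ((Real.sqrt 5 : ℝ) : ℂ) ^ 2 = 5 := by
        exact_mod_cast congrArg (Complex.ofReal ·) (Real.sq_sqrt (by norm_num : (5:ℝ) ≥ 0))
      push_cast
      linear_combination (1/4 : ℂ) * hsC
    · exact roots_aux9 _ (by
        have hsC : ((Real.sqrt 5 : ℝ) : ℂ) ^ 2 = 5 := by
          exact_mod_cast congrArg (Complex.ofReal ·) (Real.sq_sqrt (by norm_num : (5:ℝ) ≥ 0))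
        push_cast
        linear_combination (1/4 : ℂ) * hsC)
end

section
/- Assume ArchTrop(f) has exactly 2 elements. Then for every σ ∈ ArchTrop(f) there exists a root ζ ∈ ℂ∖{0} of f with |σ − log|ζ|| ≤ 1 + log(t−1). -/
set_option maxHeartbeats 2000000

lemma re_inv_gt_half {G : ℂ} (h : ‖G - 1‖ < 1) : 1/2 < (G⁻¹).re := by
  have hG : G ≠ 0 := by
    intro h0; simp [h0] at h
  have hsq : Complex.normSq (G - 1) < 1 := by
    have := Complex.sq_norm (G - 1)
    nlinarith [norm_nonneg (G - 1)]
  have hexp : Complex.normSq (G - 1) = Complex.normSq G - 2 * G.re + 1 := by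
    simp [Complex.normSq_apply, Complex.sub_re, Complex.sub_im]
    ring
  have hre : Complex.normSq G < 2 * G.re := by nlinarith
  have hpos : 0 < Complex.normSq G := Complex.normSq_pos.2 hG
  rw [Complex.inv_re]
  rw [lt_div_iff₀ hpos]
  nlinarith

open Complex Metric Set Polynomial in
lemma pellet {p : Polynomial ℂ} {cm : ℂ} {b : ℕ} (hb : b ≠ 0) {R : ℝ} (hR : 0 < R)
    (hdom : ∀ z : ℂ, ‖z‖ = R →
      ‖p.eval z - cm * z ^ b‖ < ‖cm‖ * R ^ b) :
    ∃ z : ℂ, ‖z‖ < R ∧ p.eval z = 0 := by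
  by_contra hno
  push_neg at hno
  have hball : ∀ z : ℂ, ‖z‖ ≤ R → p.eval z ≠ 0 := by
    intro z hz
    rcases eq_or_lt_of_le hz with h | h
    · intro he
      have h2 := hdom z h
      rw [he, zero_sub, norm_neg] at h2
      have heq : ‖cm * z ^ b‖ = ‖cm‖ * R ^ b := by
        rw [norm_mul, norm_pow, h]
      rw [heq] at h2
      exact lt_irrefl _ h2
    · exact fun he => (hno z h) he
  set F : ℂ → ℂ := fun z => Complex.exp (-(cm * z ^ b / p.eval z)) with hF
  have hcont : Continuous fun z : ℂ => p.eval z := p.continuous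
  have hVdiff : DifferentiableOn ℂ F {z : ℂ | p.eval z ≠ 0} := by
    apply DifferentiableOn.cexp
    apply DifferentiableOn.neg
    exact DifferentiableOn.div
      ((differentiable_const cm).mul (differentiable_pow b)).differentiableOn
      p.differentiable.differentiableOn (fun z hz => hz)
  have hsub : closure (ball (0:ℂ) R) ⊆ {z : ℂ | p.eval z ≠ 0} := by
    rw [closure_ball (0:ℂ) hR.ne']
    intro z hz
    exact hball z (by simpa [Complex.dist_eq] using mem_closedBall.1 hz)
  have hd : DiffContOnCl ℂ F (ball (0:ℂ) R) :=
    DifferentiableOn.diffContOnCl (hVdiff.mono hsub)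
  have hfr : ∀ z ∈ frontier (ball (0:ℂ) R), ‖F z‖ ≤ Real.exp (-(1/2)) := by
    intro z hz
    rw [frontier_ball (0:ℂ) hR.ne'] at hz
    have hzR : ‖z‖ = R := by
      simpa [Complex.dist_eq] using mem_sphere.1 hz
    have hA : ‖cm * z ^ b‖ = ‖cm‖ * R ^ b := by
      rw [norm_mul, norm_pow, hzR]
    have hd2 := hdom z hzR
    have hApos : 0 < ‖cm * z ^ b‖ := by
      rw [hA]; exact lt_of_le_of_lt (norm_nonneg _) hd2
    have hA0 : cm * z ^ b ≠ 0 := by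
      intro h0; rw [h0] at hApos; simp at hApos
    set G : ℂ := p.eval z / (cm * z ^ b) with hG
    have hG1 : ‖G - 1‖ < 1 := by
      have : G - 1 = (p.eval z - cm * z ^ b) / (cm * z ^ b) := by
        rw [hG, div_sub_one hA0]
      rw [this, norm_div, div_lt_one hApos, hA]
      exact hd2
    have hre := re_inv_gt_half hG1
    have hGinv : G⁻¹ = cm * z ^ b / p.eval z := by
      rw [hG, inv_div]
    rw [hGinv] at hre
    have : ‖F z‖ = Real.exp ((-(cm * z ^ b / p.eval z)).re) := by
      rw [hF]
      simp only [Complex.norm_exp]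
    rw [this, Complex.neg_re]
    exact Real.exp_le_exp.2 (by linarith)
  have h0mem : (0:ℂ) ∈ closure (ball (0:ℂ) R) := subset_closure (mem_ball_self hR)
  have hmax := Complex.norm_le_of_forall_mem_frontier_norm_le isBounded_ball hd hfr h0mem
  have hF0 : F 0 = 1 := by
    rw [hF]
    simp [zero_pow hb]
  rw [hF0] at hmax
  simp only [norm_one] at hmax
  have : Real.exp (-(1/2)) < 1 := by
    rw [Real.exp_lt_one_iff]; norm_num
  linarith

lemma multiset_pow_card_le_prod {B : ℝ} (hB : 0 < B) (s : Multiset ℝ)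
    (h : ∀ x ∈ s, B ≤ x) : B ^ Multiset.card s ≤ s.prod := by
  induction s using Multiset.induction_on with
  | empty => simp
  | cons x s ih =>
    simp only [Multiset.prod_cons, Multiset.card_cons, pow_succ]
    have hx := h x (Multiset.mem_cons_self x s)
    have hs := ih (fun y hy => h y (Multiset.mem_cons_of_mem hy))
    have hBn : (0:ℝ) < B ^ Multiset.card s := pow_pos hB _
    calc B ^ Multiset.card s * B ≤ s.prod * x := by
          apply mul_le_mul hs hx (le_of_lt hB) (le_trans hBn.le hs)
      _ = x * s.prod := mul_comm _ _

lemma geo_closed {x : ℝ} (hx0 : 0 < x) (hx1 : x < 1) (N : ℕ) :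
    ∑ j ∈ Finset.Icc 1 N, x ^ j < x / (1 - x) := by
  have h1 : ∑ j ∈ Finset.Icc 1 N, x ^ j = x * ∑ j ∈ Finset.range N, x ^ j := by
    rw [← Finset.Ico_add_one_right_eq_Icc, Finset.sum_Ico_eq_sum_range, Finset.mul_sum]
    norm_num
    apply Finset.sum_congr rfl
    intro j _
    rw [pow_add, pow_one]
  have h2 : ∑ j ∈ Finset.range N, x ^ j = (x ^ N - 1) / (x - 1) := geom_sum_eq hx1.ne N
  have hx1' : 0 < 1 - x := by linarith
  have h3 : x * ((x ^ N - 1) / (x - 1)) = x * (1 - x ^ N) / (1 - x) := by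
    rw [← neg_div_neg_eq]; ring_nf
  rw [h1, h2, h3, div_lt_div_iff₀ hx1' hx1']
  nlinarith [mul_pos (mul_pos hx0 hx1') (pow_pos hx0 N)]

lemma exp_zpow (v : ℝ) (k : ℤ) : Real.exp v ^ k = Real.exp ((k:ℝ) * v) := by
  rcases k with k | k
  · rw [Int.ofNat_eq_coe, zpow_natCast, ← Real.exp_nat_mul]
    norm_num
  · rw [zpow_negSucc, ← Real.exp_nat_mul]
    rw [← Real.exp_neg]
    congr 1
    push_cast
    ring

lemma frac_lt_of_lt {x y : ℝ} (hx0 : 0 ≤ x) (hxy : x < y) (hy : y < 1) :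
    x / (1 - x) < y / (1 - y) := by
  have h1 : 0 < 1 - x := by linarith
  have h2 : 0 < 1 - y := by linarith
  rw [div_lt_div_iff₀ h1 h2]
  nlinarith

lemma numeric_core {T mval : ℕ} (hT : 2 ≤ T) (hm1 : 1 ≤ mval) (hm2 : mval ≤ T - 1)
    {Δ : ℝ} (hΔ : 1 + Real.log (T:ℝ) < Δ) :
    ∑ j ∈ Finset.Icc 1 mval, Real.exp (-(min (Δ/2) (1+Real.log (T:ℝ)))) ^ j
      + ∑ j ∈ Finset.Icc 1 (T - mval), Real.exp (-(Δ - min (Δ/2) (1+Real.log (T:ℝ)))) ^ j < 1 := by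

  have hT0 : (0:ℝ) < (T:ℝ) := by positivity
  have hT2 : (2:ℝ) ≤ (T:ℝ) := by exact_mod_cast hT
  have hlogT : 0 < Real.log (T:ℝ) := Real.log_pos (by linarith)
  set d : ℝ := 1 + Real.log (T:ℝ) with hd
  have hd1 : 1 < d := by rw [hd]; linarith
  have hd0 : 0 < d := by linarith
  have hΔ0 : 0 < Δ := by linarith
  set s : ℝ := min (Δ/2) d with hs
  have hs0 : 0 < s := lt_min (by linarith) hd0
  have hsΔ : s < Δ := lt_of_le_of_lt (min_le_left _ _) (by linarith)
  set X : ℝ := Real.exp (-s) with hX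
  set Y : ℝ := Real.exp (-(Δ - s)) with hY
  have hX0 : 0 < X := Real.exp_pos _
  have hX1 : X < 1 := by rw [hX, Real.exp_lt_one_iff]; linarith
  have hY0 : 0 < Y := Real.exp_pos _
  have hY1 : Y < 1 := by rw [hY, Real.exp_lt_one_iff]; linarith
  have hexpd : Real.exp (-d) = Real.exp (-1) / (T:ℝ) := by
    rw [hd, neg_add, Real.exp_add, Real.exp_neg (Real.log (T:ℝ)), Real.exp_log hT0,
      div_eq_mul_inv]
  have hexp1 : Real.exp (-1) < 0.368 := by
    rw [Real.exp_neg]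
    rw [inv_lt_comm₀ (Real.exp_pos 1) (by norm_num)]
    calc (0.368:ℝ)⁻¹ < 2.7182818283 := by norm_num
      _ < Real.exp 1 := Real.exp_one_gt_d9
  have hgx := geo_closed hX0 hX1 mval
  have hgy := geo_closed hY0 hY1 (T - mval)
  rcases le_or_gt Δ (2*d) with hcase | hcase
  · -- s = Δ/2, X = Y
    have hsval : s = Δ/2 := min_eq_left (by linarith)
    have hXY : Y = X := by rw [hY, hX, hsval]; congr 1; ring
    have hX2 : X^2 < Real.exp (-1) / (T:ℝ) := by
      have : X^2 = Real.exp (-Δ) := by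
        rw [hX, ← Real.exp_nat_mul]
        congr 1
        rw [hsval]; push_cast; ring
      rw [this, ← hexpd]
      exact Real.exp_lt_exp.2 (by rw [hd] at hΔ ⊢; linarith)
    rcases lt_or_ge (T:ℝ) 4 with hT4 | hT4
    · -- T = 2 or 3
      have hT4' : T < 4 := by exact_mod_cast hT4
      interval_cases T
      · -- T = 2 : mval = 1
        interval_cases mval
        · simp only [show (2:ℕ)-1 = 1 from rfl]
          rw [hXY]
          have : ∑ j ∈ Finset.Icc 1 1, X ^ j = X := by simp
          rw [this]
          have hX2' : X^2 < (0.368:ℝ)/2 := by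
            have h := hX2
            norm_num at h
            linarith
          nlinarith
      · -- T = 3 : mval ∈ {1, 2}
        have hX2' : X^2 < (0.368:ℝ)/3 := by
          have h := hX2
          norm_num at h
          linarith
        have hs1 : ∑ j ∈ Finset.Icc 1 1, X ^ j = X := by simp
        have hs2 : ∑ j ∈ Finset.Icc 1 2, X ^ j = X + X^2 := by
          rw [show Finset.Icc 1 2 = {1, 2} from rfl]
          rw [Finset.sum_insert (by decide), Finset.sum_singleton, pow_one]
        interval_cases mval
        · rw [hXY, show (3:ℕ)-1 = 2 from rfl, hs1, hs2]
          nlinarith [sq_nonneg (X - 1/3)]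
        · rw [hXY, show (3:ℕ)-2 = 1 from rfl, hs1, hs2]
          nlinarith [sq_nonneg (X - 1/3)]
    · -- T ≥ 4
      have hXT : X^2 * (T:ℝ) < Real.exp (-1) := (lt_div_iff₀ hT0).1 hX2
      have h14 : X^2 * 4 ≤ X^2 * (T:ℝ) := mul_le_mul_of_nonneg_left hT4 (sq_nonneg X)
      have hX9 : X^2 < 1/9 := by linarith
      have hX3 : X < 1/3 := by
        by_contra hcon
        push_neg at hcon
        have : (1/3:ℝ) * (1/3) ≤ X * X := mul_le_mul hcon hcon (by norm_num) hX0.le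
        nlinarith
      have hfr : X / (1 - X) ≤ 1/2 := by
        rw [div_le_iff₀ (by linarith)]
        linarith
      calc ∑ j ∈ Finset.Icc 1 mval, X ^ j + ∑ j ∈ Finset.Icc 1 (T - mval), Y ^ j
          < X/(1-X) + Y/(1-Y) := by exact add_lt_add hgx hgy
        _ = X/(1-X) + X/(1-X) := by rw [hXY]
        _ ≤ 1 := by linarith
  · -- s = d
    have hsval : s = d := min_eq_right (by linarith)
    have hXval : X = Real.exp (-1) / (T:ℝ) := by rw [hX, hsval, hexpd]
    have hX5 : X < 1/5 := by
      have hXT : X * (T:ℝ) = Real.exp (-1) := by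
        rw [hXval]; field_simp
      nlinarith [mul_nonneg hX0.le (by linarith : (0:ℝ) ≤ (T:ℝ) - 2)]
    have hY5 : Y < X := by
      rw [hY, hX, Real.exp_lt_exp]
      linarith [hsΔ, hcase]
    have h1 : X/(1-X) < (1/5)/(1-1/5) := frac_lt_of_lt hX0.le hX5 (by norm_num)
    have h2 : Y/(1-Y) < (1/5)/(1-1/5) := frac_lt_of_lt hY0.le (by linarith) (by norm_num)
    calc ∑ j ∈ Finset.Icc 1 mval, X ^ j + ∑ j ∈ Finset.Icc 1 (T - mval), Y ^ j
        < X/(1-X) + Y/(1-Y) := add_lt_add hgx hgy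
      _ < (1/5)/(1-1/5) + (1/5)/(1-1/5) := add_lt_add h1 h2
      _ < 1 := by norm_num

open Finset in
lemma minCase {n : ℕ} (c : Fin (n+2) → ℂ) (a : Fin (n+2) → ℤ)
    (ha : StrictMono a) (hc : ∀ i, c i ≠ 0) (σ1 σ2 : ℝ) (hlt : σ1 < σ2)
    (hS : ArchTrop1 c a = {σ1, σ2}) :
    ∃ ζ : ℂ, ζ ≠ 0 ∧ upoly c a ζ = 0 ∧
      |σ1 - Real.log (‖ζ‖)| ≤ 1 + Real.log ((n:ℝ) + 1) := by
  classical
  set L : Fin (n+2) → ℝ → ℝ := fun i v => Real.log (‖c i‖) + (a i : ℝ) * v with hL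
  have habs : ∀ i, 0 < ‖c i‖ := fun i => norm_pos_iff.mpr (hc i)
  have hterm : ∀ v (i : Fin (n+2)), tropTerm1 c a v i = Real.exp (L i v) := by
    intro v i
    rw [tropTerm1, hL, Real.exp_add, Real.exp_log (habs i)]
  have hmem : ∀ v : ℝ, v ∈ ArchTrop1 c a ↔
      ∃ i k : Fin (n+2), i ≠ k ∧ (∀ l, L l v ≤ L i v) ∧ L i v = L k v := by
    intro v
    simp only [ArchTrop1, Set.mem_setOf_eq, hterm, Real.exp_le_exp, Real.exp_eq_exp]
  have hmemS : ∀ v : ℝ, v ∈ ArchTrop1 c a ↔ (v = σ1 ∨ v = σ2) := by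
    intro v; rw [hS]; simp
  have hcast : ∀ i j : Fin (n+2), i < j → (0:ℝ) < (a j : ℝ) - (a i : ℝ) := by
    intro i j hij
    have h1 := ha hij
    have : (a i : ℝ) < (a j : ℝ) := by exact_mod_cast h1
    linarith
  set W : Fin (n+2) → Fin (n+2) → ℝ := fun i j =>
    (Real.log (‖c i‖) - Real.log (‖c j‖)) / ((a j : ℝ) - (a i : ℝ))
    with hW
  have hcross_le : ∀ i j : Fin (n+2), i < j → ∀ v : ℝ, (L j v ≤ L i v ↔ v ≤ W i j) := by
    intro i j hij v
    have hpos := hcast i j hij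
    rw [hW, le_div_iff₀ hpos, hL]
    simp only
    constructor <;> intro h <;> nlinarith
  have hcross_lt : ∀ i j : Fin (n+2), i < j → ∀ v : ℝ, (L j v < L i v ↔ v < W i j) := by
    intro i j hij v
    have hpos := hcast i j hij
    rw [hW, lt_div_iff₀ hpos, hL]
    simp only
    constructor <;> intro h <;> nlinarith
  have hcross_eq : ∀ i j : Fin (n+2), i < j → ∀ v : ℝ, (L j v = L i v ↔ v = W i j) := by
    intro i j hij v
    constructor
    · intro h
      have h1 := (hcross_le i j hij v).1 h.le
      rcases eq_or_lt_of_le h1 with h3 | h3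
      · exact h3
      · exact absurd ((hcross_lt i j hij v).2 h3) (by rw [h]; exact lt_irrefl _)
    · intro h
      have h1 := (hcross_le i j hij v).2 h.le
      have h2 : ¬ (L j v < L i v) := fun hh =>
        absurd ((hcross_lt i j hij v).1 hh) (by rw [← h]; exact lt_irrefl _)
      exact le_antisymm h1 (not_lt.1 h2)
  -- σ1 is the minimum, with index 0 maximizing there
  have hne1 : ((univ.erase (0 : Fin (n+2))).image (W 0)).Nonempty := by
    apply Finset.Nonempty.image
    exact ⟨⟨1, by omega⟩, Finset.mem_erase.2 ⟨by simp [Fin.ext_iff], Finset.mem_univ _⟩⟩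
  set w : ℝ := ((univ.erase (0 : Fin (n+2))).image (W 0)).min' hne1 with hw
  obtain ⟨istar, histar, hwi⟩ := Finset.mem_image.1 (Finset.min'_mem _ hne1)
  have histar0 : istar ≠ 0 := (Finset.mem_erase.1 histar).1
  have hw_le : ∀ i : Fin (n+2), i ≠ 0 → w ≤ W 0 i := fun i hi =>
    Finset.min'_le _ _ (Finset.mem_image_of_mem _ (Finset.mem_erase.2 ⟨hi, Finset.mem_univ i⟩))
  have hmax_at_w : ∀ l, L l w ≤ L 0 w := by
    intro l
    by_cases hl : l = 0
    · rw [hl]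
    · exact (hcross_le 0 l (Fin.pos_of_ne_zero hl) w).2 (hw_le l hl)
  have hw_mem : w ∈ ArchTrop1 c a := by
    rw [hmem]
    refine ⟨0, istar, Ne.symm histar0, hmax_at_w, ?_⟩
    exact ((hcross_eq 0 istar (Fin.pos_of_ne_zero histar0) w).2 hwi.symm).symm
  have hw_min : ∀ v ∈ ArchTrop1 c a, w ≤ v := by
    intro v hv
    obtain ⟨i, k, hik, hmax, heq⟩ := (hmem v).1 hv
    have key : ∀ j : Fin (n+2), j ≠ 0 → L 0 v ≤ L j v → w ≤ v := by
      intro j hj hLj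
      have h2 : ¬ (v < W 0 j) := fun hh =>
        absurd ((hcross_lt 0 j (Fin.pos_of_ne_zero hj) v).2 hh) (not_lt.2 hLj)
      exact le_trans (hw_le j hj) (not_lt.1 h2)
    by_cases hi : i = 0
    · have hk : k ≠ 0 := fun h => hik (hi.trans h.symm)
      exact key k hk (by rw [← heq, hi])
    · exact key i hi (hmax 0)
  have hw1 : w = σ1 := by
    rcases (hmemS w).1 hw_mem with h | h
    · exact h
    · exact absurd (h ▸ hw_min σ1 ((hmemS σ1).2 (Or.inl rfl))) (not_le.2 hlt)
  have hA : ∀ l, L l σ1 ≤ L 0 σ1 := hw1 ▸ hmax_at_w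
  -- σ2 is the maximum, with top index maximizing there
  set top : Fin (n+2) := Fin.last (n+1) with htop
  have hlt_top : ∀ i : Fin (n+2), i ≠ top → i < top := fun i hi =>
    lt_of_le_of_ne (Fin.le_last i) hi
  have hne2 : ((univ.erase top).image (fun i => W i top)).Nonempty := by
    apply Finset.Nonempty.image
    exact ⟨0, Finset.mem_erase.2 ⟨by simp [htop, Fin.ext_iff], Finset.mem_univ _⟩⟩
  set x : ℝ := ((univ.erase top).image (fun i => W i top)).max' hne2 with hx
  obtain ⟨jstar, hjstar, hxj⟩ := Finset.mem_image.1 (Finset.max'_mem _ hne2)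
  have hjstar0 : jstar ≠ top := (Finset.mem_erase.1 hjstar).1
  have hx_ge : ∀ i : Fin (n+2), i ≠ top → W i top ≤ x := by
    intro i hi
    apply Finset.le_max'
    exact Finset.mem_image_of_mem (fun j => W j top)
      (Finset.mem_erase.2 ⟨hi, Finset.mem_univ i⟩)
  have hmax_at_x : ∀ l, L l x ≤ L top x := by
    intro l
    by_cases hl : l = top
    · rw [hl]
    · have h2 : ¬ (L top x < L l x) := fun hh =>
        absurd ((hcross_lt l top (hlt_top l hl) x).1 hh) (not_lt.2 (hx_ge l hl))
      exact not_lt.1 h2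
  have hx_mem : x ∈ ArchTrop1 c a := by
    rw [hmem]
    refine ⟨top, jstar, fun h => hjstar0 h.symm, hmax_at_x, ?_⟩
    exact (hcross_eq jstar top (hlt_top jstar hjstar0) x).2 hxj.symm
  have hx_max : ∀ v ∈ ArchTrop1 c a, v ≤ x := by
    intro v hv
    obtain ⟨i, k, hik, hmax, heq⟩ := (hmem v).1 hv
    have key : ∀ j : Fin (n+2), j ≠ top → L top v ≤ L j v → v ≤ x := by
      intro j hj hLj
      have h1 := (hcross_le j top (hlt_top j hj) v).1 hLj
      exact le_trans h1 (hx_ge j hj)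
    by_cases hi : i = top
    · have hk : k ≠ top := fun h => hik (hi.trans h.symm)
      exact key k hk (by rw [← heq, hi])
    · exact key i hi (hmax top)
  have hx2 : x = σ2 := by
    rcases (hmemS x).1 hx_mem with h | h
    · exact absurd (h ▸ hx_max σ2 ((hmemS σ2).2 (Or.inr rfl))) (not_le.2 hlt)
    · exact h
  have hC : ∀ l, L l σ2 ≤ L top σ2 := hx2 ▸ hmax_at_x
  -- the middle index m
  set Mset : Finset (Fin (n+2)) := univ.filter (fun i => L i σ1 = L 0 σ1) with hMset
  have hM0 : (0 : Fin (n+2)) ∈ Mset := Finset.mem_filter.2 ⟨Finset.mem_univ _, rfl⟩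
  set m : Fin (n+2) := Mset.max' ⟨0, hM0⟩ with hm
  have hmMset : m ∈ Mset := Finset.max'_mem _ _
  have hmM : L m σ1 = L 0 σ1 := (Finset.mem_filter.1 hmMset).2
  have hm_max_idx : ∀ i ∈ Mset, i ≤ m := fun i hi => Finset.le_max' _ i hi
  have hm_ne0 : m ≠ 0 := by
    have hσ1 : σ1 ∈ ArchTrop1 c a := (hmemS σ1).2 (Or.inl rfl)
    obtain ⟨i, k, hik, hmax, heq⟩ := (hmem σ1).1 hσ1
    have hiM : i ∈ Mset := Finset.mem_filter.2 ⟨Finset.mem_univ _,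
      le_antisymm (hA i) (hmax 0)⟩
    have hkM : k ∈ Mset := Finset.mem_filter.2 ⟨Finset.mem_univ _,
      le_antisymm (hA k) (heq ▸ hmax 0)⟩
    rcases ne_or_eq i 0 with hi0 | hi0
    · intro hm0
      have := hm_max_idx i hiM
      rw [hm0] at this
      exact hi0 (le_antisymm this (Fin.zero_le i))
    · intro hm0
      have hk0 : k ≠ 0 := fun h => hik (hi0.trans h.symm)
      have := hm_max_idx k hkM
      rw [hm0] at this
      exact hk0 (le_antisymm this (Fin.zero_le k))
  have hm_max1 : ∀ l, L l σ1 ≤ L m σ1 := fun l => hmM ▸ hA l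
  have hm_ne_top : m ≠ top := by
    intro hmtop
    have hσ2 : σ2 ∈ ArchTrop1 c a := (hmemS σ2).2 (Or.inr rfl)
    obtain ⟨i, k, hik, hmax, heq⟩ := (hmem σ2).1 hσ2
    have key : ∀ j : Fin (n+2), j ≠ top → L j σ2 = L top σ2 → False := by
      intro j hj hLj
      have hjt := hlt_top j hj
      have hja : (a j : ℝ) < (a top : ℝ) := by linarith [hcast j top hjt]
      have h1 : L top σ1 < L j σ1 := by
        have e1 : L j σ1 = L j σ2 + (a j : ℝ) * (σ1 - σ2) := by rw [hL]; ring
        have e2 : L top σ1 = L top σ2 + (a top : ℝ) * (σ1 - σ2) := by rw [hL]; ring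
        rw [e1, e2, hLj]
        have : (a top : ℝ) * (σ1 - σ2) < (a j : ℝ) * (σ1 - σ2) := by nlinarith
        linarith
      have h2 := hm_max1 j
      rw [hmtop] at h2
      linarith
    by_cases hi : i = top
    · have hk : k ≠ top := fun h => hik (hi.trans h.symm)
      exact key k hk (le_antisymm (hC k) (by rw [← heq, hi]))
    · exact key i hi (le_antisymm (hC i) (hmax top))
  have hm_lt_top : m < top := hlt_top m hm_ne_top
  -- m also maximizes at σ2
  have hne3 : ((univ.filter (fun i => m < i)).image (W m)).Nonempty := by
    apply Finset.Nonempty.image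
    exact ⟨top, Finset.mem_filter.2 ⟨Finset.mem_univ _, hm_lt_top⟩⟩
  set u : ℝ := ((univ.filter (fun i => m < i)).image (W m)).min' hne3 with hu
  obtain ⟨kstar, hkstar, huk⟩ := Finset.mem_image.1 (Finset.min'_mem _ hne3)
  have hkstarm : m < kstar := (Finset.mem_filter.1 hkstar).2
  have hu_le : ∀ i : Fin (n+2), m < i → u ≤ W m i := fun i hi =>
    Finset.min'_le _ _ (Finset.mem_image_of_mem _ (Finset.mem_filter.2 ⟨Finset.mem_univ i, hi⟩))
  have hstrict : ∀ i : Fin (n+2), m < i → L i σ1 < L m σ1 := by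
    intro i hi
    rcases eq_or_lt_of_le (hm_max1 i) with h | h
    · exfalso
      have hiM : i ∈ Mset := Finset.mem_filter.2 ⟨Finset.mem_univ _, h.trans hmM⟩
      exact absurd (hm_max_idx i hiM) (not_le.2 hi)
    · exact h
  have hu_gt : σ1 < u := by
    rw [hu, ← huk]
    exact (hcross_lt m kstar hkstarm σ1).1 (hstrict kstar hkstarm)
  have hmax_at_u : ∀ l, L l u ≤ L m u := by
    intro l
    rcases lt_or_ge m l with hl | hl
    · exact (hcross_le m l hl u).2 (hu_le l hl)
    · have hal : (a l : ℝ) ≤ (a m : ℝ) := by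
        rcases eq_or_lt_of_le hl with h | h
        · rw [h]
        · linarith [hcast l m h]
      have h1 : L l σ1 ≤ L m σ1 := hm_max1 l
      have e1 : L l u = L l σ1 + (a l : ℝ) * (u - σ1) := by rw [hL]; ring
      have e2 : L m u = L m σ1 + (a m : ℝ) * (u - σ1) := by rw [hL]; ring
      rw [e1, e2]
      nlinarith
  have hu_mem : u ∈ ArchTrop1 c a := by
    rw [hmem]
    refine ⟨m, kstar, ne_of_lt hkstarm, hmax_at_u, ?_⟩
    exact ((hcross_eq m kstar hkstarm u).2 huk.symm).symm
  have hu2 : u = σ2 := by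
    rcases (hmemS u).1 hu_mem with h | h
    · exact absurd (h ▸ hu_gt) (lt_irrefl σ1)
    · exact h
  have hm_max2 : ∀ l, L l σ2 ≤ L m σ2 := hu2 ▸ hmax_at_u
  have hm_eq2 : L m σ2 = L top σ2 := le_antisymm (hC m) (hm_max2 top)

  -- integer gap lemma
  have hgap : ∀ i j : Fin (n+2), i ≤ j → ((j:ℕ) : ℤ) - ((i:ℕ) : ℤ) ≤ a j - a i := by
    have step : ∀ p : ℕ, ∀ i j : Fin (n+2), (j:ℕ) = (i:ℕ) + p → (p : ℤ) ≤ a j - a i := by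
      intro p
      induction p with
      | zero =>
        intro i j hij
        have : i = j := Fin.ext (by omega)
        rw [this]; simp
      | succ q ih =>
        intro i j hij
        have hq : (i:ℕ) + q < n + 2 := by omega
        have h1 := ih i ⟨(i:ℕ) + q, hq⟩ rfl
        have h2 : a ⟨(i:ℕ) + q, hq⟩ < a j := ha (by rw [Fin.lt_def]; simp; omega)
        push_cast
        push_cast at h1
        omega
    intro i j hij
    have hval : (j:ℕ) = (i:ℕ) + ((j:ℕ) - (i:ℕ)) := by
      have := hij
      rw [Fin.le_def] at this
      omega
    have h := step ((j:ℕ) - (i:ℕ)) i j hval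
    have h2 : (((j:ℕ) - (i:ℕ) : ℕ) : ℤ) = ((j:ℕ):ℤ) - ((i:ℕ):ℤ) := by
      rw [Fin.le_def] at hij
      omega
    omega
  -- the polynomial
  have hb0' : ∀ i, a 0 ≤ a i := fun i => ha.monotone (Fin.zero_le i)
  set b : Fin (n+2) → ℕ := fun i => (a i - a 0).toNat with hbdef
  have hbz : ∀ i, (b i : ℤ) = a i - a 0 := fun i =>
    Int.toNat_of_nonneg (sub_nonneg.2 (hb0' i))
  have hbmono : StrictMono b := by
    intro i j hij
    have h1 := hbz i; have h2 := hbz j; have h3 := ha hij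
    omega
  set g : Polynomial ℂ := ∑ i, Polynomial.C (c i) * Polynomial.X ^ (b i) with hgdef
  have hcoeff : ∀ q, g.coeff q = ∑ i, if b i = q then c i else 0 := by
    intro q
    rw [hgdef, Polynomial.finset_sum_coeff]
    congr 1; ext i
    rw [Polynomial.coeff_C_mul, Polynomial.coeff_X_pow]
    by_cases h : b i = q
    · simp [h]
    · rw [if_neg h, if_neg (fun hh => h hh.symm), mul_zero]
  have hcoeffb : ∀ i, g.coeff (b i) = c i := by
    intro i
    rw [hcoeff]
    rw [Finset.sum_eq_single i (fun j _ hji => if_neg (fun h => hji (hbmono.injective h)))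
      (fun h => absurd (Finset.mem_univ i) h)]
    simp
  have hgne : g ≠ 0 := fun h => hc 0 (by rw [← hcoeffb 0, h, Polynomial.coeff_zero])
  have hdeg : g.natDegree = b top := by
    apply le_antisymm
    · rw [Polynomial.natDegree_le_iff_coeff_eq_zero]
      intro N hN
      rw [hcoeff]
      apply Finset.sum_eq_zero
      intro i _
      have : b i ≤ b top := hbmono.monotone (Fin.le_last i)
      rw [if_neg (by omega)]
    · exact Polynomial.le_natDegree_of_ne_zero (by rw [hcoeffb]; exact hc top)
  have hlead : g.leadingCoeff = c top := by
    rw [Polynomial.leadingCoeff, hdeg, hcoeffb]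
  have hmon : (g * Polynomial.C (c top)⁻¹).Monic := by
    have := Polynomial.monic_mul_leadingCoeff_inv hgne
    rwa [hlead] at this
  have hp1roots : (g * Polynomial.C (c top)⁻¹).roots = g.roots := by
    rw [mul_comm, Polynomial.roots_C_mul _ (inv_ne_zero (hc top))]
  have hp1deg : (g * Polynomial.C (c top)⁻¹).natDegree = g.natDegree :=
    Polynomial.natDegree_mul_C (inv_ne_zero (hc top))
  have hsplits : (g * Polynomial.C (c top)⁻¹).Splits :=
    IsAlgClosed.splits _
  have hcard : Multiset.card g.roots = b top := by
    rw [← hp1roots, Polynomial.splits_iff_card_roots.1 hsplits, hp1deg, hdeg]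
  have hprod := hsplits.coeff_zero_eq_prod_roots_of_monic hmon
  have hb00 : b 0 = 0 := by have := hbz 0; omega
  have hcoeff0 : g.coeff 0 = c 0 := by rw [← hb00, hcoeffb]
  have hp1c0 : (g * Polynomial.C (c top)⁻¹).coeff 0 = c 0 * (c top)⁻¹ := by
    rw [Polynomial.coeff_mul_C, hcoeff0]
  have habsprod : (g.roots.map (fun z : ℂ => ‖z‖)).prod =
      ‖c 0‖ / ‖c top‖ := by
    have h1 : ‖(g * Polynomial.C (c top)⁻¹).coeff 0‖ =
        ‖g.roots.prod‖ := by
      rw [hprod, hp1roots, norm_mul, norm_pow]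
      simp
    rw [show (g.roots.map (fun z : ℂ => ‖z‖)).prod = ‖g.roots.prod‖ from
        (map_multiset_prod (normHom (α := ℂ)) _).symm]
    rw [← h1, hp1c0, norm_mul, norm_inv, div_eq_mul_inv]
  have hgeval : ∀ z : ℂ, g.eval z = ∑ i, c i * z ^ (b i) := by
    intro z
    rw [hgdef, Polynomial.eval_finset_sum]
    simp
  have hfg : ∀ z : ℂ, z ≠ 0 → upoly c a z = z ^ (a 0) * g.eval z := by
    intro z hz
    rw [hgeval, upoly, Finset.mul_sum]
    apply Finset.sum_congr rfl
    intro i _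
    have h1 : z ^ (a i) = z ^ (a 0) * z ^ (a i - a 0) := by
      rw [← zpow_add₀ hz]; congr 1; ring
    have h2 : z ^ (a i - a 0) = z ^ (b i) := by rw [← hbz i, zpow_natCast]
    rw [h1, h2]; ring
  -- setup for contradiction
  set T : ℕ := n + 1 with hT
  set d : ℝ := 1 + Real.log ((n:ℝ)+1) with hd
  have hlog2 : Real.log 2 < 1 := by
    have := Real.log_two_lt_d9; linarith
  have hlog2' : 0 < Real.log 2 := Real.log_pos (by norm_num)
  have hlogT0 : 0 ≤ Real.log ((n:ℝ)+1) :=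
    Real.log_nonneg (by linarith [Nat.cast_nonneg (α := ℝ) n])
  have hd1 : 1 ≤ d := by rw [hd]; linarith
  by_contra hno
  push_neg at hno
  -- no small roots
  have hsmall : ∀ z : ℂ, z ≠ 0 → Real.log (‖z‖) ≤ σ1 - Real.log 2 →
      upoly c a z ≠ 0 := by
    intro z hz hv hzero
    set v : ℝ := Real.log (‖z‖) with hv0
    have hzpos : 0 < ‖z‖ := norm_pos_iff.mpr hz
    have hzv : ‖z‖ = Real.exp v := (Real.exp_log hzpos).symm
    have habsterm : ∀ i : Fin (n+2), ‖c i * z ^ (a i)‖ = Real.exp (L i v) := by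
      intro i
      rw [norm_mul, norm_zpow, hzv, exp_zpow, hL]
      rw [← Real.exp_log (habs i), ← Real.exp_add]
    have hkey : ‖c 0 * z ^ (a 0)‖ ≤
        ∑ i ∈ univ.erase 0, ‖c i * z ^ (a i)‖ := by
      have h2 := Finset.add_sum_erase univ (fun i => c i * z ^ (a i)) (Finset.mem_univ 0)
      rw [upoly] at hzero
      have h1 : c 0 * z ^ (a 0) = -∑ i ∈ univ.erase 0, c i * z ^ (a i) :=
        eq_neg_of_add_eq_zero_left (h2.trans hzero)
      rw [h1, norm_neg]
      exact norm_sum_le _ _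
    have hterms : ∀ i ∈ univ.erase (0 : Fin (n+2)),
        ‖c i * z ^ (a i)‖ ≤ Real.exp (L 0 v) * ((1:ℝ)/2) ^ (i:ℕ) := by
      intro i hi
      have hi0 : i ≠ 0 := (Finset.mem_erase.1 hi).1
      have hipos : (0:Fin (n+2)) < i := Fin.pos_of_ne_zero hi0
      have hgapi := hgap 0 i (le_of_lt hipos)
      have hgapr : ((i:ℕ):ℝ) ≤ (a i : ℝ) - (a 0 : ℝ) := by
        have h0v : ((0 : Fin (n+2)):ℕ) = 0 := rfl
        rw [h0v] at hgapi
        exact_mod_cast (by omega : ((i:ℕ):ℤ) ≤ a i - a 0)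
      have hLbound : L i v ≤ L 0 v - ((i:ℕ):ℝ) * Real.log 2 := by
        have e1 : L i v = L i σ1 - (a i : ℝ) * (σ1 - v) := by rw [hL]; ring
        have e2 : L 0 v = L 0 σ1 - (a 0 : ℝ) * (σ1 - v) := by rw [hL]; ring
        have h3 : Real.log 2 ≤ σ1 - v := by linarith
        have h4 := hA i
        rw [e1, e2]
        nlinarith
      rw [habsterm i]
      calc Real.exp (L i v) ≤ Real.exp (L 0 v - ((i:ℕ):ℝ) * Real.log 2) :=
            Real.exp_le_exp.2 hLbound
        _ = Real.exp (L 0 v) * ((1:ℝ)/2) ^ (i:ℕ) := by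
            rw [Real.exp_sub, div_eq_mul_inv]
            congr 1
            have h9 : Real.exp (((i:ℕ):ℝ) * Real.log 2) = 2 ^ (i:ℕ) := by
              rw [Real.exp_nat_mul, Real.exp_log (by norm_num : (0:ℝ) < 2)]
            rw [h9, ← inv_pow, one_div]
    have hhalf : ∑ i ∈ univ.erase (0:Fin (n+2)), ((1:ℝ)/2) ^ (i:ℕ) < 1 := by
      have hinj : ∀ x ∈ univ.erase (0:Fin (n+2)), ∀ y ∈ univ.erase (0:Fin (n+2)),
          (x:ℕ) = (y:ℕ) → x = y := fun x _ y _ h => Fin.ext h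
      have himg := Finset.sum_image (f := fun j : ℕ => ((1:ℝ)/2) ^ j)
        (g := fun i : Fin (n+2) => (i:ℕ)) hinj
      rw [← himg]
      have hsub : (univ.erase (0:Fin (n+2))).image (fun i : Fin (n+2) => (i:ℕ))
          ⊆ Finset.Icc 1 (n+1) := by
        intro j hj
        obtain ⟨i, hi, rfl⟩ := Finset.mem_image.1 hj
        have hi0 : i ≠ 0 := (Finset.mem_erase.1 hi).1
        have : 1 ≤ (i:ℕ) := Nat.pos_of_ne_zero (fun h => hi0 (Fin.ext h))
        exact Finset.mem_Icc.2 ⟨this, by omega⟩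
      calc ∑ j ∈ (univ.erase (0:Fin (n+2))).image (fun i : Fin (n+2) => (i:ℕ)),
            ((1:ℝ)/2) ^ j
          ≤ ∑ j ∈ Finset.Icc 1 (n+1), ((1:ℝ)/2) ^ j :=
            Finset.sum_le_sum_of_subset_of_nonneg hsub (fun j _ _ => by positivity)
        _ < ((1:ℝ)/2) / (1 - 1/2) := geo_closed (by norm_num) (by norm_num) _
        _ = 1 := by norm_num
    have hsum : ∑ i ∈ univ.erase (0:Fin (n+2)), ‖c i * z ^ (a i)‖
        < Real.exp (L 0 v) := by
      calc ∑ i ∈ univ.erase (0:Fin (n+2)), ‖c i * z ^ (a i)‖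
          ≤ ∑ i ∈ univ.erase (0:Fin (n+2)), Real.exp (L 0 v) * ((1:ℝ)/2) ^ (i:ℕ) :=
            Finset.sum_le_sum hterms
        _ = Real.exp (L 0 v) * ∑ i ∈ univ.erase (0:Fin (n+2)), ((1:ℝ)/2) ^ (i:ℕ) := by
            rw [Finset.mul_sum]
        _ < Real.exp (L 0 v) * 1 := by
            exact mul_lt_mul_of_pos_left hhalf (Real.exp_pos _)
        _ = Real.exp (L 0 v) := mul_one _
    rw [habsterm 0] at hkey
    linarith
  -- all roots are large
  have hband : ∀ ρ ∈ g.roots, Real.exp (σ1 + d) < ‖ρ‖ := by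
    intro ρ hρ
    have hmem' := Polynomial.mem_roots'.1 hρ
    have hev : g.eval ρ = 0 := hmem'.2
    have hρ0 : ρ ≠ 0 := by
      intro h0
      rw [h0] at hev
      rw [← Polynomial.coeff_zero_eq_eval_zero] at hev
      exact hc 0 (by rw [← hcoeff0, hev])
    have hfρ : upoly c a ρ = 0 := by
      rw [hfg ρ hρ0, hev, mul_zero]
    have hd2 := hno ρ hρ0 hfρ
    have hρpos : 0 < ‖ρ‖ := norm_pos_iff.mpr hρ0
    have hlow : σ1 - Real.log 2 < Real.log (‖ρ‖) := by
      by_contra hcon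
      push_neg at hcon
      exact hsmall ρ hρ0 hcon hfρ
    have hgt : σ1 + d < Real.log (‖ρ‖) := by
      rcases abs_cases (σ1 - Real.log (‖ρ‖)) with ⟨he, _⟩ | ⟨he, _⟩
      · exfalso
        rw [he] at hd2
        linarith
      · rw [he] at hd2
        linarith
    calc Real.exp (σ1 + d) < Real.exp (Real.log (‖ρ‖)) := Real.exp_lt_exp.2 hgt
      _ = ‖ρ‖ := Real.exp_log hρpos
  -- product comparison gives Δ > d
  set Δ : ℝ := σ2 - σ1 with hΔdef
  have hΔ0 : 0 < Δ := by rw [hΔdef]; linarith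
  have hkk : (1:ℝ) ≤ (a m : ℝ) - (a 0 : ℝ) := by
    have h1 : a 0 < a m := ha (Fin.pos_of_ne_zero hm_ne0)
    exact_mod_cast (by omega : (1:ℤ) ≤ a m - a 0)
  have hnk : (1:ℝ) ≤ (a top : ℝ) - (a m : ℝ) := by
    have h1 : a m < a top := ha hm_lt_top
    exact_mod_cast (by omega : (1:ℤ) ≤ a top - a m)
  have hid : Real.log (‖c 0‖) - Real.log (‖c top‖) =
      ((a m : ℝ) - (a 0:ℝ)) * σ1 + ((a top : ℝ) - (a m : ℝ)) * σ2 := by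
    have e1 : L 0 σ1 = L m σ1 := hmM.symm
    have e2 : L m σ2 = L top σ2 := hm_eq2
    simp only [hL] at e1 e2
    linear_combination e1 + e2
  have hprodid : (g.roots.map (fun z : ℂ => ‖z‖)).prod =
      Real.exp (((a m : ℝ) - (a 0:ℝ)) * σ1 + ((a top : ℝ) - (a m : ℝ)) * σ2) := by
    rw [habsprod, ← hid, Real.exp_sub, Real.exp_log (habs 0), Real.exp_log (habs top)]
  have hcard' : Multiset.card (g.roots.map (fun z : ℂ => ‖z‖)) = b top := by
    rw [Multiset.card_map, hcard]
  have hlowprod : Real.exp (σ1 + d) ^ (b top) ≤ (g.roots.map (fun z : ℂ => ‖z‖)).prod := by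
    rw [← hcard']
    apply multiset_pow_card_le_prod (Real.exp_pos _)
    intro y hy
    obtain ⟨ρ, hρ, rfl⟩ := Multiset.mem_map.1 hy
    exact (hband ρ hρ).le
  have hbtop_cast : ((b top : ℕ) : ℝ) = (a top : ℝ) - (a 0 : ℝ) := by
    exact_mod_cast hbz top
  have hΔd : d < Δ := by
    have h1 : Real.exp (((b top:ℕ):ℝ) * (σ1 + d)) ≤
        Real.exp (((a m : ℝ) - (a 0:ℝ)) * σ1 + ((a top : ℝ) - (a m : ℝ)) * σ2) := by
      rw [Real.exp_nat_mul, ← hprodid]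
      exact hlowprod
    have h2 := Real.exp_le_exp.1 h1
    rw [hbtop_cast] at h2
    by_contra hcon
    push_neg at hcon
    have h4 : ((a top:ℝ) - (a m:ℝ)) * (Δ - d) ≤ 0 :=
      mul_nonpos_of_nonneg_of_nonpos (by linarith) (by linarith)
    nlinarith
  -- index bounds
  have hm1' : 1 ≤ (m:ℕ) := Nat.pos_of_ne_zero (fun h => hm_ne0 (Fin.ext h))
  have hmtopval : (m:ℕ) < n + 1 := by
    have := hm_lt_top
    rw [Fin.lt_def] at this
    simpa [htop] using this
  have h2T : 2 ≤ T := by omega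
  have hm2' : (m:ℕ) ≤ T - 1 := by omega
  have hTlog : (1:ℝ) + Real.log ((T:ℕ):ℝ) = d := by
    rw [hd]
    congr 2
    push_cast [hT]
    ring
  have hnum0 := numeric_core h2T hm1' hm2' (Δ := Δ) (by rw [hTlog]; exact hΔd)
  rw [hTlog] at hnum0
  set s : ℝ := min (Δ/2) d with hs
  have hs0 : 0 < s := lt_min (by linarith) (by linarith)
  have hsd : s ≤ d := min_le_right _ _
  have hsΔ : s < Δ := lt_of_le_of_lt (min_le_left _ _) (by linarith)
  set v0 : ℝ := σ1 + s with hv0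
  set X : ℝ := Real.exp (-s) with hX
  set Y : ℝ := Real.exp (-(Δ - s)) with hY
  -- decay bounds at v0
  have hlo : ∀ i : Fin (n+2), i < m →
      Real.exp (L i v0) ≤ Real.exp (L m v0) * X ^ ((m:ℕ) - (i:ℕ)) := by
    intro i him
    have hgapi := hgap i m him.le
    have hvlt : (i:ℕ) < (m:ℕ) := him
    have hgapr : (((m:ℕ) - (i:ℕ) : ℕ):ℝ) ≤ (a m:ℝ) - (a i:ℝ) := by
      have h5 : ((m:ℕ):ℝ) - ((i:ℕ):ℝ) ≤ (a m:ℝ) - (a i:ℝ) := by exact_mod_cast hgapi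
      rw [Nat.cast_sub hvlt.le]
      exact h5
    have hLb : L i v0 ≤ L m v0 - (((m:ℕ) - (i:ℕ):ℕ):ℝ) * s := by
      have e1 : L i v0 = L i σ1 + (a i:ℝ) * s := by rw [hL, hv0]; ring
      have e2 : L m v0 = L m σ1 + (a m:ℝ) * s := by rw [hL, hv0]; ring
      have h6 := hm_max1 i
      rw [e1, e2]
      nlinarith
    calc Real.exp (L i v0)
        ≤ Real.exp (L m v0 - (((m:ℕ)-(i:ℕ):ℕ):ℝ) * s) := Real.exp_le_exp.2 hLb
      _ = Real.exp (L m v0) * X ^ ((m:ℕ)-(i:ℕ)) := by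
          rw [Real.exp_sub, div_eq_mul_inv]
          congr 1
          rw [hX, ← Real.exp_nat_mul, ← Real.exp_neg]
          congr 1; ring
  have hhi : ∀ i : Fin (n+2), m < i →
      Real.exp (L i v0) ≤ Real.exp (L m v0) * Y ^ ((i:ℕ) - (m:ℕ)) := by
    intro i him
    have hgapi := hgap m i him.le
    have hvlt : (m:ℕ) < (i:ℕ) := him
    have hgapr : (((i:ℕ) - (m:ℕ) : ℕ):ℝ) ≤ (a i:ℝ) - (a m:ℝ) := by
      have h5 : ((i:ℕ):ℝ) - ((m:ℕ):ℝ) ≤ (a i:ℝ) - (a m:ℝ) := by exact_mod_cast hgapi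
      rw [Nat.cast_sub hvlt.le]
      exact h5
    have hΔs : 0 < Δ - s := by linarith
    have hLb : L i v0 ≤ L m v0 - (((i:ℕ) - (m:ℕ):ℕ):ℝ) * (Δ - s) := by
      have e1 : L i v0 = L i σ2 - (a i:ℝ) * (Δ - s) := by
        rw [hL, hv0, hΔdef]; ring
      have e2 : L m v0 = L m σ2 - (a m:ℝ) * (Δ - s) := by
        rw [hL, hv0, hΔdef]; ring
      have h6 := hm_max2 i
      rw [e1, e2]
      nlinarith
    calc Real.exp (L i v0)
        ≤ Real.exp (L m v0 - (((i:ℕ)-(m:ℕ):ℕ):ℝ) * (Δ - s)) := Real.exp_le_exp.2 hLb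
      _ = Real.exp (L m v0) * Y ^ ((i:ℕ)-(m:ℕ)) := by
          rw [Real.exp_sub, div_eq_mul_inv]
          congr 1
          rw [hY, ← Real.exp_nat_mul, ← Real.exp_neg]
          congr 1; ring
  have hX0 : 0 < X := Real.exp_pos _
  have hY0 : 0 < Y := Real.exp_pos _
  -- sum bounds
  have hsum_lo : ∑ i ∈ univ.filter (fun i => i < m), Real.exp (L i v0)
      ≤ Real.exp (L m v0) * ∑ j ∈ Finset.Icc 1 (m:ℕ), X ^ j := by
    calc ∑ i ∈ univ.filter (fun i => i < m), Real.exp (L i v0)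
        ≤ ∑ i ∈ univ.filter (fun i => i < m), Real.exp (L m v0) * X ^ ((m:ℕ)-(i:ℕ)) :=
          Finset.sum_le_sum (fun i hi => hlo i (Finset.mem_filter.1 hi).2)
      _ = Real.exp (L m v0) * ∑ i ∈ univ.filter (fun i => i < m), X ^ ((m:ℕ)-(i:ℕ)) := by
          rw [Finset.mul_sum]
      _ ≤ Real.exp (L m v0) * ∑ j ∈ Finset.Icc 1 (m:ℕ), X ^ j := by
          apply mul_le_mul_of_nonneg_left _ (Real.exp_pos _).le
          have hinj : ∀ p ∈ univ.filter (fun i => i < m), ∀ q ∈ univ.filter (fun i => i < m),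
              (m:ℕ) - (p:ℕ) = (m:ℕ) - (q:ℕ) → p = q := by
            intro p hp q hq hpq
            have hp' : (p:ℕ) < (m:ℕ) := (Finset.mem_filter.1 hp).2
            have hq' : (q:ℕ) < (m:ℕ) := (Finset.mem_filter.1 hq).2
            exact Fin.ext (by omega)
          rw [← Finset.sum_image (f := fun j : ℕ => X ^ j)
            (g := fun i : Fin (n+2) => (m:ℕ) - (i:ℕ)) hinj]
          apply Finset.sum_le_sum_of_subset_of_nonneg
          · intro j hj
            obtain ⟨i, hi, rfl⟩ := Finset.mem_image.1 hj
            have hi' : (i:ℕ) < (m:ℕ) := (Finset.mem_filter.1 hi).2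
            exact Finset.mem_Icc.2 ⟨by omega, by omega⟩
          · intro j _ _
            positivity
  have hsum_hi : ∑ i ∈ univ.filter (fun i => m < i), Real.exp (L i v0)
      ≤ Real.exp (L m v0) * ∑ j ∈ Finset.Icc 1 (T - (m:ℕ)), Y ^ j := by
    calc ∑ i ∈ univ.filter (fun i => m < i), Real.exp (L i v0)
        ≤ ∑ i ∈ univ.filter (fun i => m < i), Real.exp (L m v0) * Y ^ ((i:ℕ)-(m:ℕ)) :=
          Finset.sum_le_sum (fun i hi => hhi i (Finset.mem_filter.1 hi).2)
      _ = Real.exp (L m v0) * ∑ i ∈ univ.filter (fun i => m < i), Y ^ ((i:ℕ)-(m:ℕ)) := by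
          rw [Finset.mul_sum]
      _ ≤ Real.exp (L m v0) * ∑ j ∈ Finset.Icc 1 (T - (m:ℕ)), Y ^ j := by
          apply mul_le_mul_of_nonneg_left _ (Real.exp_pos _).le
          have hinj : ∀ p ∈ univ.filter (fun i => m < i), ∀ q ∈ univ.filter (fun i => m < i),
              (p:ℕ) - (m:ℕ) = (q:ℕ) - (m:ℕ) → p = q := by
            intro p hp q hq hpq
            have hp' : (m:ℕ) < (p:ℕ) := (Finset.mem_filter.1 hp).2
            have hq' : (m:ℕ) < (q:ℕ) := (Finset.mem_filter.1 hq).2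
            exact Fin.ext (by omega)
          rw [← Finset.sum_image (f := fun j : ℕ => Y ^ j)
            (g := fun i : Fin (n+2) => (i:ℕ) - (m:ℕ)) hinj]
          apply Finset.sum_le_sum_of_subset_of_nonneg
          · intro j hj
            obtain ⟨i, hi, rfl⟩ := Finset.mem_image.1 hj
            have hi' : (m:ℕ) < (i:ℕ) := (Finset.mem_filter.1 hi).2
            have hiv : (i:ℕ) ≤ n + 1 := by omega
            exact Finset.mem_Icc.2 ⟨by omega, by omega⟩
          · intro j _ _
            positivity
  have htotal : ∑ i ∈ univ.erase m, Real.exp (L i v0) < Real.exp (L m v0) := by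
    have hsplit : ∑ i ∈ univ.erase m, Real.exp (L i v0) =
        ∑ i ∈ univ.filter (fun i => i < m), Real.exp (L i v0)
        + ∑ i ∈ univ.filter (fun i => m < i), Real.exp (L i v0) := by
      rw [← Finset.sum_filter_add_sum_filter_not (univ.erase m) (fun i => i < m)]
      congr 1
      · congr 1
        ext i
        simp only [Finset.mem_filter, Finset.mem_erase, Finset.mem_univ, true_and, and_true]
        constructor
        · exact fun h => h.2
        · exact fun h => ⟨ne_of_lt h, h⟩
      · congr 1
        ext i
        simp only [Finset.mem_filter, Finset.mem_erase, Finset.mem_univ, true_and, and_true]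
        constructor
        · exact fun h => lt_of_le_of_ne (not_lt.1 h.2) (Ne.symm h.1)
        · exact fun h => ⟨ne_of_gt h, not_lt.2 h.le⟩
    rw [hsplit]
    calc ∑ i ∈ univ.filter (fun i => i < m), Real.exp (L i v0)
          + ∑ i ∈ univ.filter (fun i => m < i), Real.exp (L i v0)
        ≤ Real.exp (L m v0) * ∑ j ∈ Finset.Icc 1 (m:ℕ), X ^ j
          + Real.exp (L m v0) * ∑ j ∈ Finset.Icc 1 (T - (m:ℕ)), Y ^ j :=
          add_le_add hsum_lo hsum_hi
      _ = Real.exp (L m v0) * (∑ j ∈ Finset.Icc 1 (m:ℕ), X ^ j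
          + ∑ j ∈ Finset.Icc 1 (T - (m:ℕ)), Y ^ j) := by ring
      _ < Real.exp (L m v0) * 1 := mul_lt_mul_of_pos_left hnum0 (Real.exp_pos _)
      _ = Real.exp (L m v0) := mul_one _
  -- Pellet's argument
  have hbm0 : b m ≠ 0 := by
    have h1 := hbz m
    have h2 : a 0 < a m := ha (Fin.pos_of_ne_zero hm_ne0)
    omega
  have hRpos : (0:ℝ) < Real.exp v0 := Real.exp_pos _
  have hdom : ∀ z : ℂ, ‖z‖ = Real.exp v0 →
      ‖g.eval z - c m * z ^ (b m)‖ < ‖c m‖ * (Real.exp v0) ^ (b m) := by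
    intro z hzR
    have hzero' : g.eval z - c m * z ^ (b m) = ∑ i ∈ univ.erase m, c i * z ^ (b i) := by
      rw [hgeval]
      rw [← Finset.add_sum_erase univ (fun i => c i * z ^ (b i)) (Finset.mem_univ m)]
      ring
    have habsi : ∀ i : Fin (n+2), ‖c i * z ^ (b i)‖ =
        Real.exp (L i v0) * Real.exp (-((a 0:ℝ) * v0)) := by
      intro i
      rw [norm_mul, norm_pow, hzR, ← Real.exp_nat_mul]
      rw [← Real.exp_log (habs i), ← Real.exp_add, ← Real.exp_add]
      congr 1
      have hbir : ((b i:ℕ):ℝ) = (a i:ℝ) - (a 0:ℝ) := by exact_mod_cast hbz i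
      simp only [hL]
      rw [hbir]
      ring
    have hrhs : ‖c m‖ * (Real.exp v0) ^ (b m) =
        Real.exp (L m v0) * Real.exp (-((a 0:ℝ) * v0)) := by
      have h7 := habsi m
      rw [norm_mul, norm_pow, hzR] at h7
      exact h7
    calc ‖g.eval z - c m * z ^ (b m)‖
        = ‖∑ i ∈ univ.erase m, c i * z ^ (b i)‖ := by rw [hzero']
      _ ≤ ∑ i ∈ univ.erase m, ‖c i * z ^ (b i)‖ := norm_sum_le _ _
      _ = ∑ i ∈ univ.erase m, Real.exp (L i v0) * Real.exp (-((a 0:ℝ) * v0)) :=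
          Finset.sum_congr rfl (fun i _ => habsi i)
      _ = (∑ i ∈ univ.erase m, Real.exp (L i v0)) * Real.exp (-((a 0:ℝ) * v0)) := by
          rw [Finset.sum_mul]
      _ < Real.exp (L m v0) * Real.exp (-((a 0:ℝ) * v0)) :=
          mul_lt_mul_of_pos_right htotal (Real.exp_pos _)
      _ = ‖c m‖ * (Real.exp v0) ^ (b m) := hrhs.symm
  obtain ⟨z0, hz0R, hz0ev⟩ := pellet hbm0 hRpos hdom
  have hz00 : z0 ≠ 0 := by
    intro h0
    rw [h0, ← Polynomial.coeff_zero_eq_eval_zero] at hz0ev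
    exact hc 0 (by rw [← hcoeff0, hz0ev])
  have hfz0 : upoly c a z0 = 0 := by rw [hfg z0 hz00, hz0ev, mul_zero]
  have hz0pos : 0 < ‖z0‖ := norm_pos_iff.mpr hz00
  have hlogz0 : Real.log (‖z0‖) < v0 := by
    have h8 := Real.log_lt_log hz0pos hz0R
    rwa [Real.log_exp] at h8
  have hlogz0' : σ1 - Real.log 2 < Real.log (‖z0‖) := by
    by_contra hcon
    push_neg at hcon
    exact hsmall z0 hz00 hcon hfz0
  have habsle : |σ1 - Real.log (‖z0‖)| ≤ d := by
    rw [abs_le]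
    constructor
    · rw [hv0] at hlogz0
      linarith
    · linarith
  exact absurd habsle (not_le.2 (hno z0 hz00 hfz0))


open Finset in
lemma arch_reverse {n : ℕ} (c : Fin (n+2) → ℂ) (a : Fin (n+2) → ℤ) (v : ℝ) :
    v ∈ ArchTrop1 (fun i => c i.rev) (fun i => -a i.rev) ↔ -v ∈ ArchTrop1 c a := by
  have hterm : ∀ (w : ℝ) (i : Fin (n+2)),
      tropTerm1 (fun i => c i.rev) (fun i => -a i.rev) w i = tropTerm1 c a (-w) i.rev := by
    intro w i
    simp only [tropTerm1]
    congr 1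
    push_cast
    ring_nf
  constructor
  · rintro ⟨i, k, hik, hmax, heq⟩
    refine ⟨i.rev, k.rev, fun h => hik (by rw [← Fin.rev_rev i, h, Fin.rev_rev]), ?_, ?_⟩
    · intro l
      have := hmax l.rev
      rwa [hterm, hterm, Fin.rev_rev] at this
    · rw [← hterm, ← hterm]
      exact heq
  · rintro ⟨i, k, hik, hmax, heq⟩
    refine ⟨i.rev, k.rev, fun h => hik (by rw [← Fin.rev_rev i, h, Fin.rev_rev]), ?_, ?_⟩
    · intro l
      rw [hterm, hterm, Fin.rev_rev]
      exact hmax l.rev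
    · rw [hterm, hterm, Fin.rev_rev, Fin.rev_rev]
      exact heq

/-- If `ArchTrop(f)` has exactly 2 points, then every `σ ∈ ArchTrop(f)` is within distance
`1 + log(t-1)` of `log|ζ|` for some nonzero root `ζ` of `f`. -/
theorem stmt11 {t : ℕ}
    (c : Fin t → ℂ) (a : Fin t → ℤ) (ha : StrictMono a) (hc : ∀ i, c i ≠ 0)
    (hcard : (ArchTrop1 c a).ncard = 2) :
    ∀ σ ∈ ArchTrop1 c a, ∃ ζ : ℂ, ζ ≠ 0 ∧ upoly c a ζ = 0 ∧
      |σ - Real.log ‖ζ‖| ≤ 1 + Real.log ((t : ℝ) - 1) := by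
  have ht2 : 2 ≤ t := by
    by_contra h
    push_neg at h
    have hempty : ArchTrop1 c a = ∅ := by
      ext v
      simp only [ArchTrop1, Set.mem_setOf_eq, Set.mem_empty_iff_false, iff_false, not_exists]
      intro i k
      rintro ⟨hik, -⟩
      have : (i:ℕ) < t := i.isLt
      have : (k:ℕ) < t := k.isLt
      exact hik (Fin.ext (by omega))
    rw [hempty] at hcard
    simp at hcard
  obtain ⟨n, rfl⟩ : ∃ n, t = n + 2 := ⟨t - 2, by omega⟩
  have hcastb : ((n+2:ℕ) : ℝ) - 1 = (n:ℝ) + 1 := by push_cast; ring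
  obtain ⟨x, y, hxy, hSxy⟩ := Set.ncard_eq_two.1 hcard
  intro σ hσ
  -- reduce to ordered pair
  obtain ⟨σ1, σ2, hlt, hS⟩ : ∃ σ1 σ2 : ℝ, σ1 < σ2 ∧ ArchTrop1 c a = {σ1, σ2} := by
    rcases lt_trichotomy x y with h | h | h
    · exact ⟨x, y, h, hSxy⟩
    · exact absurd h hxy
    · exact ⟨y, x, h, by rw [hSxy, Set.pair_comm]⟩
  rw [hcastb]
  have hσ12 : σ = σ1 ∨ σ = σ2 := by
    rw [hS] at hσ
    simpa using hσ
  rcases hσ12 with h | h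
  · rw [h]
    exact minCase c a ha hc σ1 σ2 hlt hS
  · rw [h]
 -- reverse the polynomial
    set c' : Fin (n+2) → ℂ := fun i => c i.rev with hc'def
    set a' : Fin (n+2) → ℤ := fun i => -a i.rev with ha'def
    have ha' : StrictMono a' := by
      intro i j hij
      have h1 : j.rev < i.rev := by rwa [Fin.rev_lt_rev]
      have h2 := ha h1
      simp only [ha'def]
      omega
    have hc'' : ∀ i, c' i ≠ 0 := fun i => hc i.rev
    have hS2 : ArchTrop1 c' a' = {-σ2, -σ1} := by
      ext v
      rw [hc'def, ha'def, arch_reverse, hS]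
      simp only [Set.mem_insert_iff, Set.mem_singleton_iff]
      constructor
      · rintro (h | h)
        · right; linarith
        · left; linarith
      · rintro (h | h)
        · right; linarith
        · left; linarith
    obtain ⟨ζ', hζ'0, hζ'root, hζ'bound⟩ :=
      minCase c' a' ha' hc'' (-σ2) (-σ1) (by linarith) hS2
    refine ⟨ζ'⁻¹, inv_ne_zero hζ'0, ?_, ?_⟩
    · rw [← hζ'root, upoly, upoly]
      rw [← Equiv.sum_comp (Fin.revPerm) (fun i => c i * (ζ'⁻¹) ^ (a i))]
      apply Finset.sum_congr rfl
      intro i _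
      simp only [hc'def, ha'def, Fin.revPerm_apply]
      congr 1
      rw [inv_zpow, ← zpow_neg]
    · rw [norm_inv, Real.log_inv]
      have : σ2 - -Real.log (‖ζ'‖) = -(-σ2 - Real.log (‖ζ'‖)) := by ring
      rw [this, abs_neg]
      exact hζ'bound
end

section
/- Assume t ≥ 2 and a_1 = 0 (so f(0) = c_1 ≠ 0 and f has exactly a_t complex roots counted with multiplicity, all nonzero). Let σ, σ' ∈ ArchTrop(f) satisfy σ' > σ + 2·log(t−1) and (σ, σ') ∩ ArchTrop(f) = ∅, and let m ∈ {1,…,t} be the (necessarily unique) index such that a_m·v + log|c_m| > a_i·v + log|c_i| for all i ≠ m and all v ∈ (σ, σ'). Then f has exactly a_m roots ζ ∈ ℂ, counted with multiplicity, satisfying log|ζ| ≤ σ + log(t−1), and exactly a_t − a_m roots, counted with multiplicity, satisfying log|ζ| ≥ σ' − log(t−1). -/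
attribute [local instance] Classical.propDecidable

/-- `f` as a polynomial in `ℂ[x]` (exponents `a i` are nonnegative when `a_1 = 0` and
`a` is strictly increasing). -/
noncomputable def upolyP {t : ℕ} (c : Fin t → ℂ) (a : Fin t → ℤ) : Polynomial ℂ :=
  ∑ i, Polynomial.C (c i) * Polynomial.X ^ (a i).toNat

section Aux
open Polynomial Metric Real Complex Finset

-- single pole integral
lemma circ_int_single {r : ℝ} (hr : 0 < r) (ζ : ℂ) (hζ : ‖ζ‖ ≠ r) :
    (∮ z in C(0, r), (z - ζ)⁻¹)
      = if ‖ζ‖ < r then (2 * π * Complex.I) else 0 := by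
  split_ifs with h
  · exact circleIntegral.integral_sub_inv_of_mem_ball (by simpa [Complex.dist_eq] using h)
  · have hgt : r < ‖ζ‖ := lt_of_le_of_ne (not_lt.1 h) (Ne.symm hζ)
    refine circleIntegral_eq_zero_of_differentiable_on_off_countable hr.le
      Set.countable_empty ?_ ?_
    · refine (continuousOn_id.sub continuousOn_const).inv₀ ?_
      intro z hz
      refine sub_ne_zero.2 ?_
      intro rfl'
      subst rfl'
      simp only [closedBall, Set.mem_setOf_eq, Complex.dist_eq, sub_zero] at hz
      exact absurd hz (not_le.2 hgt)
    · intro z hz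
      have : z ≠ ζ := by
        intro rfl'
        subst rfl'
        have := hz.1
        simp only [ball, Set.mem_setOf_eq, Complex.dist_eq, sub_zero] at this
        exact absurd this (not_lt.2 hgt.le)
      exact (differentiableAt_id.sub_const ζ).inv (sub_ne_zero.2 this)

-- log derivative of C k * prod (X - C a)
lemma logderiv_prod (k : ℂ) (s : Multiset ℂ) (z : ℂ) (hz : ∀ ζ ∈ s, z ≠ ζ) :
    (derivative (C k * (s.map fun a => X - C a).prod)).eval z
      = ((C k * (s.map fun a => X - C a).prod).eval z) * (s.map fun ζ => (z - ζ)⁻¹).sum := by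
  induction s using Multiset.induction_on with
  | empty => simp
  | cons ζ s ih =>
      have hzζ : z - ζ ≠ 0 := sub_ne_zero.2 (hz ζ (Multiset.mem_cons_self ζ s))
      have ih' := ih (fun x hx => hz x (Multiset.mem_cons_of_mem hx))
      have key : C k * ((ζ ::ₘ s).map fun a => X - C a).prod
          = (X - C ζ) * (C k * (s.map fun a => X - C a).prod) := by
        rw [Multiset.map_cons, Multiset.prod_cons]; ring
      rw [key, derivative_mul]
      simp only [derivative_sub, derivative_X, derivative_C, sub_zero, one_mul,
        eval_add, eval_mul, eval_sub, eval_X, eval_C, Multiset.map_cons, Multiset.sum_cons]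
      rw [ih']
      field_simp
      simp only [eval_mul, eval_C]
      ring

lemma circleIntegral_add {f g : ℂ → ℂ} {c : ℂ} {R : ℝ} (hf : CircleIntegrable f c R)
    (hg : CircleIntegrable g c R) :
    (∮ z in C(c, R), (f z + g z)) = (∮ z in C(c, R), f z) + ∮ z in C(c, R), g z := by
  simp only [circleIntegral, smul_add, intervalIntegral.integral_add hf.out hg.out]

lemma contOn_pole_sum {r : ℝ} (s : Multiset ℂ) (hs : ∀ ζ ∈ s, ‖ζ‖ ≠ r) :
    ContinuousOn (fun z : ℂ => (s.map fun x => (z - x)⁻¹).sum) (sphere (0:ℂ) r) := by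
  induction s using Multiset.induction_on with
  | empty => simpa using continuousOn_const (c := (0:ℂ))
  | cons ζ s ih =>
      have hζ := hs ζ (Multiset.mem_cons_self ζ s)
      have h1 : ContinuousOn (fun z : ℂ => (z - ζ)⁻¹) (sphere (0:ℂ) r) := by
        refine (continuousOn_id.sub continuousOn_const).inv₀ ?_
        intro z hz
        refine sub_ne_zero.2 ?_
        intro rfl'; subst rfl'
        exact hζ (by simpa [Complex.dist_eq] using hz)
      have h2 := ih (fun x hx => hs x (Multiset.mem_cons_of_mem hx))
      have h3 := h1.add h2
      simp only [Multiset.map_cons, Multiset.sum_cons]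
      exact h3

lemma circ_int_multiset {r : ℝ} (hr : 0 < r) (s : Multiset ℂ)
    (hs : ∀ ζ ∈ s, ‖ζ‖ ≠ r) :
    (∮ z in C(0, r), (s.map fun ζ => (z - ζ)⁻¹).sum)
      = 2 * π * Complex.I * ((s.filter fun ζ => ‖ζ‖ < r).card : ℂ) := by
  classical
  induction s using Multiset.induction_on with
  | empty => simp [circleIntegral]
  | cons ζ s ih =>
      have hζ := hs ζ (Multiset.mem_cons_self ζ s)
      have hs' : ∀ x ∈ s, ‖x‖ ≠ r := fun x hx => hs x (Multiset.mem_cons_of_mem hx)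
      have hint1 : CircleIntegrable (fun z => (z - ζ)⁻¹) 0 r := by
        apply ContinuousOn.circleIntegrable hr.le
        refine (continuousOn_id.sub continuousOn_const).inv₀ ?_
        intro z hz
        refine sub_ne_zero.2 ?_
        intro rfl'; subst rfl'
        exact hζ (by simpa [Complex.dist_eq] using hz)
      have hint2 : CircleIntegrable (fun z => (s.map fun x => (z - x)⁻¹).sum) 0 r :=
        ContinuousOn.circleIntegrable hr.le (contOn_pole_sum s hs')
      have step : (∮ z in C(0, r), ((ζ ::ₘ s).map fun x => (z - x)⁻¹).sum)
          = (∮ z in C(0, r), (z - ζ)⁻¹) + ∮ z in C(0, r), (s.map fun x => (z - x)⁻¹).sum := by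
        rw [← circleIntegral_add hint1 hint2]
        simp [Multiset.map_cons, Multiset.sum_cons]
      rw [step, circ_int_single hr ζ hζ, ih hs', Multiset.filter_cons]
      split_ifs with h
      · simp; ring
      · simp

lemma count_integral (p : Polynomial ℂ) (hp : p ≠ 0) {r : ℝ} (hr : 0 < r)
    (hroots : ∀ ζ ∈ p.roots, ‖ζ‖ ≠ r) :
    (∮ z in C(0, r), (derivative p).eval z / p.eval z)
      = 2 * π * Complex.I * ((p.roots.filter fun ζ => ‖ζ‖ < r).card : ℂ) := by
  have hsplit : p = C p.leadingCoeff * (p.roots.map fun a => X - C a).prod :=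
    (IsAlgClosed.splits p).eq_prod_roots
  have key : Set.EqOn (fun z => (derivative p).eval z / p.eval z)
      (fun z => (p.roots.map fun ζ => (z - ζ)⁻¹).sum) (sphere (0:ℂ) r) := by
    intro z hz
    have hzr : ‖z‖ = r := by simpa [Complex.dist_eq] using hz
    have hne : ∀ ζ ∈ p.roots, z ≠ ζ := by
      intro ζ hζ h
      exact hroots ζ hζ (h ▸ hzr)
    have hev : p.eval z ≠ 0 := by
      intro h
      exact hroots z ((mem_roots hp).2 h) hzr
    have := logderiv_prod p.leadingCoeff p.roots z hne
    rw [← hsplit] at this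
    simp only [this]
    field_simp
  rw [circleIntegral.integral_congr hr.le key, circ_int_multiset hr p.roots hroots]

lemma nat_valued_const {G : ℝ → ℝ} (hG : Continuous G) (hn : ∀ s, ∃ n : ℕ, G s = n) :
    G 0 = G 1 := by
  by_contra hne
  rcases lt_or_gt_of_ne hne with h | h
  · obtain ⟨n0, h0⟩ := hn 0
    obtain ⟨n1, h1⟩ := hn 1
    have hn01 : (n0 : ℝ) + 1 ≤ n1 := by
      have : n0 < n1 := by exact_mod_cast (h0 ▸ h1 ▸ h)
      exact_mod_cast this
    have hmem : G 0 + 1/2 ∈ Set.Icc (G 0) (G 1) := by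
      constructor <;> [linarith; linarith [h0, h1]]
    obtain ⟨x, _, hx⟩ := intermediate_value_Icc zero_le_one hG.continuousOn hmem
    obtain ⟨n, hnx⟩ := hn x
    rw [hnx] at hx
    rcases le_or_gt n n0 with hle | hlt
    · have : (n : ℝ) ≤ n0 := by exact_mod_cast hle
      rw [h0] at hx; linarith
    · have : (n0 : ℝ) + 1 ≤ n := by exact_mod_cast hlt
      rw [h0] at hx; linarith
  · obtain ⟨n0, h0⟩ := hn 0
    obtain ⟨n1, h1⟩ := hn 1
    have hn01 : (n1 : ℝ) + 1 ≤ n0 := by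
      have : n1 < n0 := by exact_mod_cast (h0 ▸ h1 ▸ h)
      exact_mod_cast this
    have hmem : G 1 + 1/2 ∈ Set.Icc (G 1) (G 0) := by
      constructor <;> [linarith; linarith [h0, h1]]
    obtain ⟨x, _, hx⟩ := intermediate_value_Icc' zero_le_one hG.continuousOn hmem
    obtain ⟨n, hnx⟩ := hn x
    rw [hnx] at hx
    rcases le_or_gt n n1 with hle | hlt
    · have : (n : ℝ) ≤ n1 := by exact_mod_cast hle
      rw [h1] at hx; linarith
    · have : (n1 : ℝ) + 1 ≤ n := by exact_mod_cast hlt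
      rw [h1] at hx; linarith

lemma rouche_poly (g q : Polynomial ℂ) {r : ℝ} (hr : 0 < r)
    (hlt : ∀ z : ℂ, ‖z‖ = r → ‖q.eval z‖ < ‖g.eval z‖) :
    (((g + q).roots.filter fun ζ => ‖ζ‖ < r).card)
      = ((g.roots.filter fun ζ => ‖ζ‖ < r).card) := by
  classical
  set clamp : ℝ → ℝ := fun s => max 0 (min 1 s) with hclampdef
  have hclamp0 : ∀ s, 0 ≤ clamp s := fun s => le_max_left _ _
  have hclamp1 : ∀ s, clamp s ≤ 1 := fun s => max_le zero_le_one (min_le_left _ _)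
  have hclamp_cont : Continuous clamp := continuous_const.max (continuous_const.min continuous_id)
  set P : ℝ → Polynomial ℂ := fun s => g + C ((clamp s : ℝ) : ℂ) * q with hPdef
  -- nonvanishing on the circle
  have hPz : ∀ s : ℝ, ∀ z : ℂ, ‖z‖ = r → (P s).eval z ≠ 0 := by
    intro s z hz h0
    have hev : g.eval z + ((clamp s : ℝ) : ℂ) * q.eval z = 0 := by
      simpa [hPdef] using h0
    have h1 : ‖g.eval z‖ = (clamp s) * ‖q.eval z‖ := by
      have : g.eval z = -(((clamp s : ℝ) : ℂ) * q.eval z) := by linear_combination hev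
      rw [this, norm_neg, norm_mul, Complex.norm_of_nonneg (hclamp0 s)]
    have h2 : (clamp s) * ‖q.eval z‖ ≤ ‖q.eval z‖ := by
      nlinarith [norm_nonneg (q.eval z), hclamp1 s, hclamp0 s]
    have := hlt z hz
    linarith [h1 ▸ h2]
  have hPne : ∀ s : ℝ, P s ≠ 0 := by
    intro s h0
    have : (P s).eval (r : ℂ) ≠ 0 := hPz s (r : ℂ) (by simp [abs_of_pos hr])
    rw [h0] at this
    simp at this
  have hProots : ∀ s : ℝ, ∀ ζ ∈ (P s).roots, ‖ζ‖ ≠ r := by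
    intro s ζ hζ habs
    exact hPz s ζ habs ((mem_roots (hPne s)).1 hζ)
  set N : ℝ → ℕ := fun s => (((P s).roots.filter fun ζ => ‖ζ‖ < r).card) with hNdef
  -- the parametric integrand
  set den : ℝ × ℝ → ℂ := fun p =>
    g.eval (circleMap 0 r p.2) + ((clamp p.1 : ℝ) : ℂ) * q.eval (circleMap 0 r p.2) with hden
  set num : ℝ × ℝ → ℂ := fun p =>
    (derivative g).eval (circleMap 0 r p.2)
      + ((clamp p.1 : ℝ) : ℂ) * (derivative q).eval (circleMap 0 r p.2) with hnum
  have habs_circle : ∀ θ : ℝ, ‖circleMap 0 r θ‖ = r := by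
    intro θ; rw [norm_circleMap_zero, abs_of_pos hr]
  have hden_ne : ∀ p : ℝ × ℝ, den p ≠ 0 := by
    intro p h0
    apply hPz p.1 (circleMap 0 r p.2) (habs_circle p.2)
    simpa [hPdef, hden] using h0
  have hcont_circ : Continuous fun p : ℝ × ℝ => circleMap 0 r p.2 :=
    (continuous_circleMap 0 r).comp continuous_snd
  have hcont_clamp : Continuous fun p : ℝ × ℝ => ((clamp p.1 : ℝ) : ℂ) :=
    Complex.continuous_ofReal.comp (hclamp_cont.comp continuous_fst)
  have hcont_den : Continuous den :=
    (g.continuous.comp hcont_circ).add (hcont_clamp.mul (q.continuous.comp hcont_circ))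
  have hcont_num : Continuous num :=
    ((derivative g).continuous.comp hcont_circ).add
      (hcont_clamp.mul ((derivative q).continuous.comp hcont_circ))
  set f : ℝ → ℝ → ℂ := fun s θ => (circleMap 0 r θ * Complex.I) * (num (s, θ) / den (s, θ))
    with hfdef
  have hfcont : Continuous (Function.uncurry f) := by
    have : Function.uncurry f = fun p : ℝ × ℝ =>
        (circleMap 0 r p.2 * Complex.I) * (num p / den p) := rfl
    rw [this]
    exact (hcont_circ.mul continuous_const).mul (hcont_num.div hcont_den hden_ne)
  set F : ℝ → ℂ := fun s => ∫ θ in (0:ℝ)..(2 * π), f s θ with hFdef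
  have hFcont : Continuous F :=
    intervalIntegral.continuous_parametric_intervalIntegral_of_continuous' hfcont 0 (2 * π)
  have hF_eq : ∀ s : ℝ, F s = 2 * π * Complex.I * (N s : ℂ) := by
    intro s
    have h1 : F s = ∮ z in C(0, r), (derivative (P s)).eval z / (P s).eval z := by
      rw [hFdef, circleIntegral]
      apply intervalIntegral.integral_congr
      intro θ _
      simp only [hfdef, deriv_circleMap, smul_eq_mul]
      congr 1
      rw [hPdef]
      simp [hnum, hden, derivative_add, derivative_C_mul, eval_add, eval_mul, eval_C]
    rw [h1, count_integral (P s) (hPne s) hr (hProots s)]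
  -- integer-valuedness
  set G : ℝ → ℝ := fun s => (F s / (2 * π * Complex.I)).re with hGdef
  have h2piI : (2 * π * Complex.I : ℂ) ≠ 0 := by
    simp [Real.pi_ne_zero, Complex.I_ne_zero]
  have hGN : ∀ s, G s = (N s : ℝ) := by
    intro s
    rw [hGdef]
    simp only [hF_eq s]
    rw [mul_comm, mul_div_assoc, div_self h2piI, mul_one]
    simp
  have hGcont : Continuous G := (Complex.continuous_re).comp (hFcont.div_const _)
  have hG01 : G 0 = G 1 := nat_valued_const hGcont (fun s => ⟨N s, hGN s⟩)
  have hN01 : N 0 = N 1 := by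
    have := (hGN 0) ▸ (hGN 1) ▸ hG01
    exact_mod_cast this
  have hP0 : P 0 = g := by
    simp [hPdef, hclampdef]
  have hP1 : P 1 = g + q := by
    simp [hPdef, hclampdef]
  rw [hNdef] at hN01
  simp only [hP0, hP1] at hN01
  exact hN01.symm

-- endpoint nonneg for continuous functions
lemma endpoint_nonneg {x y : ℝ} (hxy : x < y) {f : ℝ → ℝ} (hf : Continuous f)
    (h : ∀ v ∈ Set.Ioo x y, 0 ≤ f v) : 0 ≤ f x ∧ 0 ≤ f y := by
  have hcl : closure (Set.Ioo x y) = Set.Icc x y := closure_Ioo hxy.ne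
  have key : ∀ z ∈ Set.Icc x y, 0 ≤ f z := by
    intro z hz
    have hz' : z ∈ closure (Set.Ioo x y) := hcl ▸ hz
    have hne : (nhdsWithin z (Set.Ioo x y)).NeBot := mem_closure_iff_nhdsWithin_neBot.mp hz'
    exact ge_of_tendsto ((hf.tendsto z).mono_left nhdsWithin_le_nhds)
      (eventually_nhdsWithin_of_forall h)
  exact ⟨key x ⟨le_refl x, hxy.le⟩, key y ⟨hxy.le, le_refl y⟩⟩

lemma sum_term_lt {t : ℕ} (c : Fin t → ℂ) (a : Fin t → ℤ) (ht : 2 ≤ t) (m : Fin t) (v : ℝ)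
    (hub : ∀ i, i ≠ m → tropTerm1 c a v i * ((t : ℝ) - 1) ≤ tropTerm1 c a v m)
    (j : Fin t) (hj : j ≠ m) (hjs : tropTerm1 c a v j * ((t : ℝ) - 1) < tropTerm1 c a v m) :
    ∑ i ∈ Finset.univ.erase m, tropTerm1 c a v i < tropTerm1 c a v m := by
  classical
  have ht1 : (0 : ℝ) < (t : ℝ) - 1 := by
    have : (2 : ℝ) ≤ t := by exact_mod_cast ht
    linarith
  have hlt : ∑ i ∈ Finset.univ.erase m, tropTerm1 c a v i
      < ∑ _i ∈ Finset.univ.erase m, tropTerm1 c a v m / ((t : ℝ) - 1) := by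
    apply Finset.sum_lt_sum
    · intro i hi
      have := hub i (Finset.ne_of_mem_erase hi)
      rw [le_div_iff₀ ht1]
      exact this
    · refine ⟨j, Finset.mem_erase.2 ⟨hj, Finset.mem_univ j⟩, ?_⟩
      rw [lt_div_iff₀ ht1]
      exact hjs
  have hcard : (Finset.univ.erase m).card = t - 1 := by
    rw [Finset.card_erase_of_mem (Finset.mem_univ m), Finset.card_univ, Fintype.card_fin]
  rw [Finset.sum_const, hcard] at hlt
  have hc2 : ((t - 1 : ℕ) : ℝ) = (t : ℝ) - 1 := by
    have : (1:ℕ) ≤ t := by omega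
    push_cast [this]
    ring
  calc ∑ i ∈ Finset.univ.erase m, tropTerm1 c a v i
      < (t - 1 : ℕ) • (tropTerm1 c a v m / ((t : ℝ) - 1)) := hlt
    _ = tropTerm1 c a v m := by
        rw [nsmul_eq_mul, hc2]
        field_simp

lemma dominance {t : ℕ} (ht : 3 ≤ t) (c : Fin t → ℂ) (a : Fin t → ℤ)
    (ha : StrictMono a) (hc : ∀ i, c i ≠ 0) (σ σ' : ℝ)
    (hgap : σ + 2 * Real.log ((t : ℝ) - 1) < σ') (m : Fin t)
    (hm : ∀ v ∈ Set.Ioo σ σ', ∀ i, i ≠ m →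
      (a i : ℝ) * v + Real.log (‖c i‖) <
        (a m : ℝ) * v + Real.log (‖c m‖)) :
    (∑ i ∈ Finset.univ.erase m, tropTerm1 c a (σ + Real.log ((t : ℝ) - 1)) i
        < tropTerm1 c a (σ + Real.log ((t : ℝ) - 1)) m) ∧
    (∑ i ∈ Finset.univ.erase m, tropTerm1 c a (σ' - Real.log ((t : ℝ) - 1)) i
        < tropTerm1 c a (σ' - Real.log ((t : ℝ) - 1)) m) := by
  classical
  set lam : ℝ := Real.log ((t : ℝ) - 1) with hlamdef
  set b : Fin t → ℝ := fun i => Real.log (‖c i‖) with hbdef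
  have ht1 : (2 : ℝ) ≤ (t : ℝ) - 1 := by
    have : (3 : ℝ) ≤ t := by exact_mod_cast ht
    linarith
  have hlam : 0 < lam := by
    rw [hlamdef]
    apply Real.log_pos
    linarith
  have hσσ' : σ < σ' := by linarith
  -- endpoint inequalities
  have hbd : ∀ i, i ≠ m →
      ((a i : ℝ) * σ + b i ≤ (a m : ℝ) * σ + b m) ∧
      ((a i : ℝ) * σ' + b i ≤ (a m : ℝ) * σ' + b m) := by
    intro i hi
    have hf : Continuous fun v : ℝ =>
        ((a m : ℝ) * v + b m) - ((a i : ℝ) * v + b i) := by fun_prop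
    have h := endpoint_nonneg hσσ' hf (fun v hv => by
      have := hm v hv i hi
      simp only [hbdef]
      linarith)
    constructor <;> linarith [h.1, h.2]
  -- integer comparisons
  have hane : ∀ i, i ≠ m → a i ≠ a m := fun i hi h => hi (ha.injective h)
  -- nonstrict bound at v₁ = σ + lam
  have key1 : ∀ i, i ≠ m →
      ((a i : ℝ) * (σ + lam) + b i) + lam ≤ (a m : ℝ) * (σ + lam) + b m := by
    intro i hi
    rcases lt_or_gt_of_ne (hane i hi) with hlt | hgt
    · have h1 := (hbd i hi).1
      have hint : a i + 1 ≤ a m := hlt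
      have hr : (a i : ℝ) + 1 ≤ (a m : ℝ) := by exact_mod_cast hint
      nlinarith
    · have h2 := (hbd i hi).2
      have hint : a m + 1 ≤ a i := hgt
      have hr : (a m : ℝ) + 1 ≤ (a i : ℝ) := by exact_mod_cast hint
      nlinarith [mul_le_mul_of_nonneg_left (show σ + lam + lam ≤ σ' by linarith)
        (show (0:ℝ) ≤ (a i : ℝ) - (a m : ℝ) by linarith)]
  -- strict bound at v₁
  have key1s : ∀ i, i ≠ m → (a m < a i ∨ a i + 2 ≤ a m) →
      ((a i : ℝ) * (σ + lam) + b i) + lam < (a m : ℝ) * (σ + lam) + b m := by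
    intro i hi hcond
    rcases hcond with hgt | h2le
    · have h2 := (hbd i hi).2
      have hr : (a m : ℝ) + 1 ≤ (a i : ℝ) := by exact_mod_cast hgt
      nlinarith [mul_le_mul_of_nonneg_left (show σ + lam + lam < σ' by linarith).le
        (show (0:ℝ) ≤ (a i : ℝ) - (a m : ℝ) by linarith)]
    · have h1 := (hbd i hi).1
      have hr : (a i : ℝ) + 2 ≤ (a m : ℝ) := by exact_mod_cast h2le
      nlinarith
  -- nonstrict bound at v₂ = σ' - lam
  have key2 : ∀ i, i ≠ m →
      ((a i : ℝ) * (σ' - lam) + b i) + lam ≤ (a m : ℝ) * (σ' - lam) + b m := by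
    intro i hi
    rcases lt_or_gt_of_ne (hane i hi) with hlt | hgt
    · have h1 := (hbd i hi).1
      have hr : (a i : ℝ) + 1 ≤ (a m : ℝ) := by exact_mod_cast (hlt : a i + 1 ≤ a m)
      nlinarith [mul_le_mul_of_nonneg_left (show σ + lam + lam ≤ σ' by linarith)
        (show (0:ℝ) ≤ (a m : ℝ) - (a i : ℝ) by linarith)]
    · have h2 := (hbd i hi).2
      have hr : (a m : ℝ) + 1 ≤ (a i : ℝ) := by exact_mod_cast (hgt : a m + 1 ≤ a i)
      nlinarith
  -- strict bound at v₂
  have key2s : ∀ i, i ≠ m → (a i < a m ∨ a m + 2 ≤ a i) →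
      ((a i : ℝ) * (σ' - lam) + b i) + lam < (a m : ℝ) * (σ' - lam) + b m := by
    intro i hi hcond
    rcases hcond with hlt | h2le
    · have h1 := (hbd i hi).1
      have hr : (a i : ℝ) + 1 ≤ (a m : ℝ) := by exact_mod_cast (hlt : a i + 1 ≤ a m)
      nlinarith [mul_le_mul_of_nonneg_left (show σ + lam + lam < σ' by linarith).le
        (show (0:ℝ) ≤ (a m : ℝ) - (a i : ℝ) by linarith)]
    · have h2 := (hbd i hi).2
      have hr : (a m : ℝ) + 2 ≤ (a i : ℝ) := by exact_mod_cast h2le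
      nlinarith
  -- conversion to tropTerm
  have hterm : ∀ v (i : Fin t),
      tropTerm1 c a v i = Real.exp ((a i : ℝ) * v + b i) := by
    intro v i
    rw [tropTerm1, Real.exp_add, hbdef, Real.exp_log (norm_pos_iff.2 (hc i))]
    ring
  have ht1exp : (t : ℝ) - 1 = Real.exp lam := (Real.exp_log (by linarith)).symm
  have hub1 : ∀ i, i ≠ m → tropTerm1 c a (σ + lam) i * ((t : ℝ) - 1)
      ≤ tropTerm1 c a (σ + lam) m := by
    intro i hi
    rw [hterm, hterm, ht1exp, ← Real.exp_add]
    exact Real.exp_le_exp.2 (key1 i hi)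
  have hub2 : ∀ i, i ≠ m → tropTerm1 c a (σ' - lam) i * ((t : ℝ) - 1)
      ≤ tropTerm1 c a (σ' - lam) m := by
    intro i hi
    rw [hterm, hterm, ht1exp, ← Real.exp_add]
    exact Real.exp_le_exp.2 (key2 i hi)
  -- special indices
  set iz : Fin t := ⟨0, by omega⟩ with hiz
  set io : Fin t := ⟨1, by omega⟩ with hio
  set il : Fin t := ⟨t - 1, by omega⟩ with hil
  have h01 : a iz < a io := ha (by simp [hiz, hio, Fin.lt_def])
  have h1l : a io < a il := ha (by simp [hio, hil, Fin.lt_def]; omega)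
  have hzl : iz ≠ il := by
    simp only [hiz, hil, Ne, Fin.mk.injEq]
    omega
  constructor
  · -- at v₁
    by_cases hml : m = il
    · refine sum_term_lt c a (by omega) m _ hub1 iz (by rw [hml]; exact hzl) ?_
      rw [hterm, hterm, ht1exp, ← Real.exp_add]
      refine Real.exp_lt_exp.2 (key1s iz (by rw [hml]; exact hzl) (Or.inr ?_))
      rw [hml]; omega
    · have hmlt : m < il := by
        rcases lt_or_ge m il with h | h
        · exact h
        · exfalso; apply hml; apply le_antisymm ?_ h
          exact Fin.mk_le_mk.2 (by omega) |>.trans_eq rfl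
      have hml' : a m < a il := ha hmlt
      refine sum_term_lt c a (by omega) m _ hub1 il (fun h => hml h.symm) ?_
      rw [hterm, hterm, ht1exp, ← Real.exp_add]
      exact Real.exp_lt_exp.2 (key1s il (fun h => hml h.symm) (Or.inl hml'))
  · -- at v₂
    by_cases hmz : m = iz
    · refine sum_term_lt c a (by omega) m _ hub2 il (by rw [hmz]; exact hzl.symm) ?_
      rw [hterm, hterm, ht1exp, ← Real.exp_add]
      refine Real.exp_lt_exp.2 (key2s il (by rw [hmz]; exact hzl.symm) (Or.inr ?_))
      rw [hmz]; omega
    · have hm1 : m.1 ≠ 0 := fun h => hmz (Fin.ext h)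
      have hzm : iz < m := by
        rw [Fin.lt_def]
        simp only [hiz]
        omega
      have hzm' : a iz < a m := ha hzm
      refine sum_term_lt c a (by omega) m _ hub2 iz (fun h => hmz h.symm) ?_
      rw [hterm, hterm, ht1exp, ← Real.exp_add]
      exact Real.exp_lt_exp.2 (key2s iz (fun h => hmz h.symm) (Or.inl hzm'))

lemma upolyP_eval {t : ℕ} (c : Fin t → ℂ) (a : Fin t → ℤ) (z : ℂ) : (upolyP c a).eval z = ∑ i, c i * z ^ (a i).toNat := by
  simp [upolyP, eval_finset_sum]

lemma upolyP_coeff_top {t : ℕ} (c : Fin t → ℂ) (a : Fin t → ℤ) (ht : 1 ≤ t) (ha : StrictMono a) (ha0 : a ⟨0, by omega⟩ = 0) :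
    (upolyP c a).coeff (a ⟨t - 1, by omega⟩).toNat = c ⟨t - 1, by omega⟩ := by
  classical
  rw [upolyP, finset_sum_coeff]
  rw [Finset.sum_eq_single (⟨t - 1, by omega⟩ : Fin t)]
  · simp
  · intro i _ hi
    have hilt : i < (⟨t - 1, by omega⟩ : Fin t) := by
      rw [Fin.lt_def]
      have h1 : i.1 ≠ t - 1 := fun h => hi (Fin.ext h)
      have h2 := i.2
      simp only []
      omega
    have h1 : a i < a ⟨t - 1, by omega⟩ := ha hilt
    have h0 : 0 ≤ a i := by
      have := ha.monotone (show (⟨0, by omega⟩ : Fin t) ≤ i by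
        rw [Fin.le_def]; simp only []; omega)
      omega
    have hne : (a i).toNat ≠ (a ⟨t - 1, by omega⟩).toNat := by omega
    simp [coeff_C_mul, coeff_X_pow, Ne.symm hne]
  · intro h
    exact absurd (Finset.mem_univ _) h

lemma upolyP_natDegree {t : ℕ} (c : Fin t → ℂ) (a : Fin t → ℤ) (ht : 1 ≤ t) (ha : StrictMono a) (hc : ∀ i, c i ≠ 0)
    (ha0 : a ⟨0, by omega⟩ = 0) :
    (upolyP c a).natDegree = (a ⟨t - 1, by omega⟩).toNat := by
  classical
  apply le_antisymm
  · apply natDegree_sum_le_of_forall_le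
    intro i _
    refine (natDegree_C_mul_X_pow_le (c i) _).trans ?_
    have h0 : 0 ≤ a i := by
      have := ha.monotone (show (⟨0, by omega⟩ : Fin t) ≤ i by
        rw [Fin.le_def]; simp only []; omega)
      omega
    have h1 : a i ≤ a ⟨t - 1, by omega⟩ := by
      refine ha.monotone ?_
      rw [Fin.le_def]
      have := i.2
      simp only []
      omega
    omega
  · apply le_natDegree_of_ne_zero
    rw [upolyP_coeff_top c a ht ha ha0]
    exact hc _

lemma upolyP_ne_zero {t : ℕ} (c : Fin t → ℂ) (a : Fin t → ℤ) (ht : 1 ≤ t) (ha : StrictMono a) (hc : ∀ i, c i ≠ 0)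
    (ha0 : a ⟨0, by omega⟩ = 0) : upolyP c a ≠ 0 := by
  intro h
  have := upolyP_coeff_top c a ht ha ha0
  rw [h] at this
  simp only [coeff_zero] at this
  exact hc _ this.symm

lemma upolyP_roots_card {t : ℕ} (c : Fin t → ℂ) (a : Fin t → ℤ) (ht : 1 ≤ t) (ha : StrictMono a) (hc : ∀ i, c i ≠ 0)
    (ha0 : a ⟨0, by omega⟩ = 0) :
    (upolyP c a).roots.card = (a ⟨t - 1, by omega⟩).toNat := by
  rw [← upolyP_natDegree c a ht ha hc ha0]
  exact splits_iff_card_roots.mp (IsAlgClosed.splits _)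

lemma upolyP_eval_zero {t : ℕ} (c : Fin t → ℂ) (a : Fin t → ℤ) (ht : 1 ≤ t) (ha : StrictMono a) (ha0 : a ⟨0, by omega⟩ = 0) :
    (upolyP c a).eval 0 = c ⟨0, by omega⟩ := by
  classical
  rw [upolyP_eval]
  rw [Finset.sum_eq_single (⟨0, by omega⟩ : Fin t)]
  · rw [ha0]; simp
  · intro i _ hi
    have hpos : (0:ℕ) < t := by omega
    have h0 : (⟨0, hpos⟩ : Fin t) < i := by
      rw [Fin.lt_def]
      have : i.1 ≠ 0 := fun h => hi (Fin.ext h)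
      simp only []
      omega
    have h2 : a ⟨0, hpos⟩ < a i := ha h0
    have h3 : a ⟨0, hpos⟩ = 0 := ha0
    have h1 : 0 < a i := by omega
    have : (a i).toNat ≠ 0 := by omega
    simp [zero_pow this]
  · intro h
    exact absurd (Finset.mem_univ _) h

lemma upolyP_roots_ne_zero {t : ℕ} (c : Fin t → ℂ) (a : Fin t → ℤ) (ht : 1 ≤ t) (ha : StrictMono a) (hc : ∀ i, c i ≠ 0)
    (ha0 : a ⟨0, by omega⟩ = 0) : ∀ ζ ∈ (upolyP c a).roots, ζ ≠ 0 := by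
  intro ζ hζ h0
  subst h0
  have := (mem_roots (upolyP_ne_zero c a ht ha hc ha0)).1 hζ
  rw [IsRoot, upolyP_eval_zero c a ht ha ha0] at this
  exact hc _ this

lemma t2_contra (c : Fin 2 → ℂ) (a : Fin 2 → ℤ) (ha : StrictMono a) (hc : ∀ i, c i ≠ 0)
    (σ σ' : ℝ) (hσ : σ ∈ ArchTrop1 c a) (hσ' : σ' ∈ ArchTrop1 c a) (hlt : σ < σ') : False := by
  have key : ∀ v ∈ ArchTrop1 c a, tropTerm1 c a v 0 = tropTerm1 c a v 1 := by
    rintro v ⟨i, k, hik, _, heq⟩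
    fin_cases i <;> fin_cases k <;> simp_all
  have h1 := key σ hσ
  have h2 := key σ' hσ'
  have hb : ∀ (v : ℝ) (i : Fin 2), tropTerm1 c a v i
      = Real.exp ((a i : ℝ) * v + Real.log (‖c i‖)) := by
    intro v i
    rw [tropTerm1, Real.exp_add, Real.exp_log (norm_pos_iff.2 (hc i))]
    ring
  rw [hb, hb] at h1 h2
  have e1 := Real.exp_injective h1
  have e2 := Real.exp_injective h2
  have ha01 : a 0 < a 1 := ha (by norm_num)
  have haR : (a 0 : ℝ) < (a 1 : ℝ) := by exact_mod_cast ha01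
  nlinarith [mul_pos (sub_pos.2 haR) (sub_pos.2 hlt)]

lemma count_at_radius {t : ℕ} (ht : 2 ≤ t) (c : Fin t → ℂ) (a : Fin t → ℤ)
    (ha : StrictMono a) (hc : ∀ i, c i ≠ 0) (ha0 : a ⟨0, Nat.zero_lt_two.trans_le ht⟩ = 0)
    (m : Fin t) (v : ℝ)
    (hdom : ∑ i ∈ Finset.univ.erase m, tropTerm1 c a v i < tropTerm1 c a v m) :
    (((upolyP c a).roots.filter fun ζ => ‖ζ‖ < Real.exp v).card = (a m).toNat)
    ∧ ∀ ζ ∈ (upolyP c a).roots, ‖ζ‖ ≠ Real.exp v := by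
  classical
  set r : ℝ := Real.exp v with hrdef
  have hr : 0 < r := Real.exp_pos v
  have hnonneg : ∀ i, 0 ≤ a i := by
    intro i
    have hpos : (0:ℕ) < t := by omega
    have h3 : a ⟨0, hpos⟩ = 0 := ha0
    have := ha.monotone (show (⟨0, hpos⟩ : Fin t) ≤ i by
      rw [Fin.le_def]; simp only []; omega)
    omega
  -- each monomial's absolute value on the circle
  have habs_mono : ∀ (i : Fin t) (z : ℂ), ‖z‖ = r →
      ‖c i * z ^ (a i).toNat‖ = tropTerm1 c a v i := by
    intro i z hz
    rw [norm_mul, norm_pow, hz, tropTerm1]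
    congr 1
    rw [hrdef, ← Real.exp_nat_mul]
    congr 1
    have : ((a i).toNat : ℝ) = ((a i : ℤ) : ℝ) := by
      have := hnonneg i
      exact_mod_cast congrArg (fun x : ℤ => (x : ℝ)) (Int.toNat_of_nonneg this)
    rw [this, mul_comm]
  set g : Polynomial ℂ := C (c m) * X ^ (a m).toNat with hgdef
  set q : Polynomial ℂ := ∑ i ∈ Finset.univ.erase m, C (c i) * X ^ (a i).toNat with hqdef
  have hgq : g + q = upolyP c a := by
    rw [hgdef, hqdef, upolyP]
    exact Finset.add_sum_erase Finset.univ (fun i => C (c i) * X ^ (a i).toNat) (Finset.mem_univ m)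
  have hgabs : ∀ z : ℂ, ‖z‖ = r →
      ‖g.eval z‖ = tropTerm1 c a v m := by
    intro z hz
    rw [hgdef]
    simp only [eval_mul, eval_C, eval_pow, eval_X]
    exact habs_mono m z hz
  have hqabs : ∀ z : ℂ, ‖z‖ = r →
      ‖q.eval z‖ ≤ ∑ i ∈ Finset.univ.erase m, tropTerm1 c a v i := by
    intro z hz
    rw [hqdef]
    simp only [eval_finset_sum, eval_mul, eval_C, eval_pow, eval_X]
    refine (norm_sum_le _ _).trans ?_
    apply Finset.sum_le_sum
    intro i _
    rw [habs_mono i z hz]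
  have hlt : ∀ z : ℂ, ‖z‖ = r →
      ‖q.eval z‖ < ‖g.eval z‖ := by
    intro z hz
    rw [hgabs z hz]
    exact lt_of_le_of_lt (hqabs z hz) hdom
  constructor
  · rw [← hgq, rouche_poly g q hr hlt, hgdef, roots_C_mul_X_pow (hc m)]
    rw [Multiset.filter_eq_self.2]
    · simp
    · intro ζ hζ
      have : ζ = 0 := by
        have := Multiset.mem_of_mem_nsmul hζ
        simpa using this
      rw [this]
      simpa using hr
  · intro ζ hζ habs
    have hroot : (upolyP c a).eval ζ = 0 := by
      have hne : upolyP c a ≠ 0 := by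
        intro h
        rw [h] at hζ
        simp at hζ
      exact (mem_roots hne).1 hζ
    rw [← hgq] at hroot
    have : g.eval ζ = - q.eval ζ := by
      rw [eval_add] at hroot
      linear_combination hroot
    have habs2 : ‖g.eval ζ‖ = ‖q.eval ζ‖ := by
      rw [this, norm_neg]
    have := hlt ζ habs
    rw [habs2] at this
    exact lt_irrefl _ this

end Aux

/-- If consecutive points `σ < σ'` of `ArchTrop(f)` satisfy `σ' > σ + 2·log(t-1)`, and
`m` is the index whose tropical term dominates strictly on `(σ, σ')`, then `f` has exactly
`a_m` roots (with multiplicity) with `log|ζ| ≤ σ + log(t-1)` and exactly `a_t - a_m` roots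
(with multiplicity) with `log|ζ| ≥ σ' - log(t-1)`. -/
theorem stmt13 {t : ℕ} (ht : 2 ≤ t)
    (c : Fin t → ℂ) (a : Fin t → ℤ) (ha : StrictMono a) (hc : ∀ i, c i ≠ 0)
    (ha0 : a ⟨0, by omega⟩ = 0)
    (σ σ' : ℝ) (hσ : σ ∈ ArchTrop1 c a) (hσ' : σ' ∈ ArchTrop1 c a)
    (hgap : σ + 2 * Real.log ((t : ℝ) - 1) < σ')
    (hempty : Set.Ioo σ σ' ∩ ArchTrop1 c a = ∅)
    (m : Fin t)
    (hm : ∀ v ∈ Set.Ioo σ σ', ∀ i, i ≠ m →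
      (a i : ℝ) * v + Real.log (‖c i‖) <
        (a m : ℝ) * v + Real.log (‖c m‖)) :
    (((upolyP c a).roots.filter
        (fun z => Real.log (‖z‖) ≤ σ + Real.log ((t : ℝ) - 1))).card
      = (a m).toNat) ∧
    (((upolyP c a).roots.filter
        (fun z => σ' - Real.log ((t : ℝ) - 1) ≤ Real.log (‖z‖))).card
      = (a ⟨t - 1, by omega⟩).toNat - (a m).toNat) := by
  classical
  rcases eq_or_lt_of_le ht with h2 | h3
  · -- t = 2 : contradictory hypotheses
    exfalso
    subst h2
    have hlt : σ < σ' := by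
      have h1 : ((2 : ℕ) : ℝ) - 1 = 1 := by norm_num
      rw [h1, Real.log_one] at hgap
      linarith
    exact t2_contra c a ha hc σ σ' hσ hσ' hlt
  · -- t ≥ 3
    obtain ⟨hdom1, hdom2⟩ := dominance h3 c a ha hc σ σ' hgap m hm
    obtain ⟨hcount1, hne1⟩ := count_at_radius ht c a ha hc ha0 m
      (σ + Real.log ((t : ℝ) - 1)) hdom1
    obtain ⟨hcount2, hne2⟩ := count_at_radius ht c a ha hc ha0 m
      (σ' - Real.log ((t : ℝ) - 1)) hdom2
    have ht1 : (1 : ℕ) ≤ t := by omega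
    have hroots0 := upolyP_roots_ne_zero c a ht1 ha hc ha0
    have habs_pos : ∀ ζ ∈ (upolyP c a).roots, 0 < ‖ζ‖ := fun ζ hζ =>
      norm_pos_iff.2 (hroots0 ζ hζ)
    constructor
    · rw [Multiset.filter_congr (q := fun z =>
        ‖z‖ < Real.exp (σ + Real.log ((t : ℝ) - 1))) ?_]
      · exact hcount1
      · intro ζ hζ
        rw [Real.log_le_iff_le_exp (habs_pos ζ hζ)]
        constructor
        · intro h
          exact lt_of_le_of_ne h (hne1 ζ hζ)
        · exact le_of_lt
    · have htot := upolyP_roots_card c a ht1 ha hc ha0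
      have hsplit := congrArg Multiset.card
        (Multiset.filter_add_not
          (fun z => σ' - Real.log ((t : ℝ) - 1) ≤ Real.log (‖z‖))
          (upolyP c a).roots)
      rw [Multiset.card_add] at hsplit
      have hnotfil : ((upolyP c a).roots.filter
          (fun z => ¬ (σ' - Real.log ((t : ℝ) - 1) ≤ Real.log (‖z‖)))).card
          = (a m).toNat := by
        rw [Multiset.filter_congr (q := fun z =>
          ‖z‖ < Real.exp (σ' - Real.log ((t : ℝ) - 1))) ?_]
        · exact hcount2
        · intro ζ hζ
          rw [not_le, Real.log_lt_iff_lt_exp (habs_pos ζ hζ)]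
      rw [hnotfil, htot] at hsplit
      omega
end
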